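/- arXiv:1611.08496 — 4 statements merged into one kernel-verified Lean document; each statement's English description precedes it below -/
import Mathlib

section
/- Let a < 0 < b be real numbers, m ∈ {0,1}, t ∈ ℕ, and y ∈ [a, 0). Let (F_s)_{s=0}^t be a filtration on a probability space, let τ be a stopping time with respect to (F_s)_{s=0}^t, and let Y₀, Y₁, …, Y_t be random variables such that Y_s is F_s-measurable and Y_s − Y_{s−1} ∈ [a, b] almost surely for every s ∈ {1,…,t}. Suppose that for every s ∈ {1,…,t}, E[ 1_{s≤τ}·(−1)^m·(Y_s − Y_{s−1}) | F_{s−1} ] ≤ y·1_{s≤τ} almost surely. Then P[ (−1)^m·(Y_{τ∧t} − Y₀) + 1_{t>τ}·(t−τ)·y > yt/2 ] < exp( − y²t / (12(b−a)²) ). -/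
open MeasureTheory

noncomputable section
open scoped Classical

lemma exp_le_quadratic {x : ℝ} (h : |x| ≤ 1/2) :
    Real.exp x ≤ 1 + x + (11/18) * x^2 := by
  have h1 : |x| ≤ 1 := h.trans (by norm_num)
  have hb := Real.exp_bound h1 (n := 3) (by norm_num)
  have hsum : ∑ m ∈ Finset.range 3, x ^ m / m.factorial = 1 + x + x^2/2 := by
    simp [Finset.sum_range_succ]
  rw [hsum] at hb
  have h3 : |x|^3 ≤ (1/2) * x^2 := by
    have h4 : |x|^3 = |x| * |x|^2 := by ring
    rw [h4, sq_abs]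
    nlinarith [sq_nonneg x, abs_nonneg x]
  have hc : ((3:ℕ).succ : ℝ) / ((3:ℕ).factorial * (3:ℕ)) = 2/9 := by
    norm_num [Nat.factorial]
  rw [hc] at hb
  have h5 := abs_le.mp hb
  nlinarith [sq_nonneg x]

set_option maxHeartbeats 2000000 in
/-- **Lemma (a maximal-type concentration inequality for supermartingale-like processes
with a stopping time).**
If the increments `Y_s - Y_{s-1}` lie in `[a,b]` and, up to the stopping time `τ`, the
conditional expectation of `(-1)^m (Y_s - Y_{s-1})` given `F_{s-1}` is at most `y < 0`,
then `(-1)^m (Y_{τ∧t} - Y_0) + 1_{t>τ}(t-τ)y > yt/2` holds with probability less than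
`exp(-y²t/(12(b-a)²))`. -/
theorem stopped_concentration
    {Ω : Type*} {m0 : MeasurableSpace Ω} (μ : Measure Ω) [IsProbabilityMeasure μ]
    (a b : ℝ) (ha : a < 0) (hb : 0 < b) (m : ℕ) (hm : m ≤ 1) (t : ℕ)
    (y : ℝ) (hya : a ≤ y) (hy0 : y < 0)
    (F : Filtration ℕ m0)
    (τ : Ω → ℕ) (hτ : IsStoppingTime F (fun ω => (τ ω : WithTop ℕ)))
    (Y : ℕ → Ω → ℝ)
    (hmeas : ∀ s, s ≤ t → StronglyMeasurable[F s] (Y s))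
    (hbdd : ∀ s, 1 ≤ s → s ≤ t →
      ∀ᵐ ω ∂μ, Y s ω - Y (s - 1) ω ∈ Set.Icc a b)
    (hdrift : ∀ s, 1 ≤ s → s ≤ t →
      ∀ᵐ ω ∂μ,
        (μ[fun ω' => (if s ≤ τ ω' then ((-1 : ℝ) ^ m) * (Y s ω' - Y (s - 1) ω') else 0) |
            F (s - 1)]) ω
          ≤ (if s ≤ τ ω then y else 0)) :
    (μ {ω | y * t / 2 <
        ((-1 : ℝ) ^ m) * (Y (min (τ ω) t) ω - Y 0 ω)
          + (if τ ω < t then ((t : ℝ) - (τ ω : ℝ)) * y else 0)}).toReal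
      < Real.exp (-(y ^ 2 * t) / (12 * (b - a) ^ 2)) := by
  classical
  rcases Nat.eq_zero_or_pos t with ht0 | ht1
  · subst ht0
    have hset : {ω : Ω | y * ((0:ℕ):ℝ) / 2 <
        ((-1 : ℝ) ^ m) * (Y (min (τ ω) 0) ω - Y 0 ω)
          + (if τ ω < 0 then (((0:ℕ) : ℝ) - (τ ω : ℝ)) * y else 0)} = ∅ := by
      ext ω; simp
    rw [hset]
    simpa using Real.exp_pos _
  -- main case
  set c : ℝ := b - a with hcdef
  have hc0 : 0 < c := by simp only [hcdef]; linarith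
  set sgn : ℝ := (-1 : ℝ) ^ m with hsgndef
  have hsgn : sgn = 1 ∨ sgn = -1 := by
    interval_cases m
    · left; simp [hsgndef]
    · right; simp [hsgndef]
  have habs_sgn : ∀ x : ℝ, |sgn * x| = |x| := by
    intro x; rcases hsgn with h | h <;> simp [h, abs_mul]
  set D : ℕ → Ω → ℝ := fun s ω => if s ≤ τ ω then sgn * (Y s ω - Y (s - 1) ω) else y
    with hDdef
  set Z : ℕ → Ω → ℝ := fun s ω => ∑ r ∈ Finset.range s, D (r + 1) ω with hZdef
  -- pointwise identity
  have hZeq : ∀ ω, ∀ s : ℕ,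
      Z s ω = sgn * (Y (min (τ ω) s) ω - Y 0 ω)
        + ((s : ℝ) - (min (τ ω) s : ℕ)) * y := by
    intro ω s
    induction s with
    | zero => simp [hZdef]
    | succ n ih =>
      have hsum : Z (n+1) ω = Z n ω + D (n+1) ω := by
        simp only [hZdef]; exact Finset.sum_range_succ _ n
      rw [hsum, ih]
      by_cases h : n + 1 ≤ τ ω
      · have h1 : min (τ ω) n = n := min_eq_right (by omega)
        have h2 : min (τ ω) (n+1) = n+1 := min_eq_right h
        have h3 : D (n+1) ω = sgn * (Y (n+1) ω - Y n ω) := by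
          simp only [hDdef, if_pos h, Nat.add_sub_cancel]
        rw [h1, h2, h3]
        push_cast
        ring
      · have h1 : min (τ ω) n = τ ω := min_eq_left (by omega)
        have h2 : min (τ ω) (n+1) = τ ω := min_eq_left (by omega)
        have h3 : D (n+1) ω = y := by simp only [hDdef, if_neg h]
        rw [h1, h2, h3]
        push_cast
        ring
  -- the event set, rewritten
  have hsetZ : {ω : Ω | y * t / 2 <
        ((-1 : ℝ) ^ m) * (Y (min (τ ω) t) ω - Y 0 ω)
          + (if τ ω < t then ((t : ℝ) - (τ ω : ℝ)) * y else 0)}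
      = {ω : Ω | y * t / 2 < Z t ω} := by
    ext ω
    simp only [Set.mem_setOf_eq]
    rw [hZeq ω t]
    by_cases h : τ ω < t
    · rw [if_pos h, min_eq_left h.le]
    · rw [if_neg h, min_eq_right (not_lt.mp h)]
      simp [hsgndef]
  -- stopping-time measurable sets
  have hA : ∀ s : ℕ, 1 ≤ s → MeasurableSet[F (s-1)] {ω | s ≤ τ ω} := by
    intro s hs
    have h1 : {ω | s ≤ τ ω} = {ω | τ ω ≤ s - 1}ᶜ := by
      ext ω; simp only [Set.mem_setOf_eq, Set.mem_compl_iff]; omega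
    rw [h1]
    exact (by convert hτ (s-1) using 1; ext ω; simp only [Set.mem_setOf_eq]; exact WithTop.coe_le_coe.symm : MeasurableSet[F (s-1)] {ω | τ ω ≤ s - 1}).compl
  -- measurability of D
  have hDmeas : ∀ s : ℕ, 1 ≤ s → s ≤ t → StronglyMeasurable[F s] (D s) := by
    intro s hs hst
    have hAs : MeasurableSet[F s] {ω | s ≤ τ ω} :=
      (F.mono (Nat.sub_le s 1)) _ (hA s hs)
    exact StronglyMeasurable.ite hAs
      (((hmeas s hst).sub ((hmeas (s-1) ((Nat.sub_le s 1).trans hst)).mono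
        (F.mono (Nat.sub_le s 1)))).const_mul sgn)
      stronglyMeasurable_const
  have hZmeas : ∀ s : ℕ, s ≤ t → StronglyMeasurable[F s] (Z s) := by
    intro s hst
    apply Finset.stronglyMeasurable_fun_sum
    intro r hr
    have hr1 : r + 1 ≤ s := Finset.mem_range.mp hr
    exact ((hDmeas (r+1) (Nat.le_add_left 1 r) (hr1.trans hst)).mono (F.mono hr1))
  -- a.e. bound on D
  have hDbdd : ∀ s : ℕ, 1 ≤ s → s ≤ t → ∀ᵐ ω ∂μ, |D s ω| ≤ c := by
    intro s hs hst
    filter_upwards [hbdd s hs hst] with ω hω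
    simp only [hDdef]
    by_cases hcase : s ≤ τ ω
    · rw [if_pos hcase, habs_sgn]
      rw [abs_le]
      obtain ⟨h1, h2⟩ := hω
      constructor <;> simp only [hcdef] <;> linarith
    · rw [if_neg hcase, abs_le]
      constructor <;> simp only [hcdef] <;> linarith
  -- conditional drift bound on D
  have hcond : ∀ s : ℕ, 1 ≤ s → s ≤ t →
      μ[D s | F (s-1)] ≤ᵐ[μ] fun _ => y := by
    intro s hs hst
    set f : Ω → ℝ := fun ω' => if s ≤ τ ω' then sgn * (Y s ω' - Y (s - 1) ω') else 0
      with hfdef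
    set g : Ω → ℝ := fun ω' => if s ≤ τ ω' then 0 else y with hgdef
    have hfg : D s = f + g := by
      funext ω
      by_cases h : s ≤ τ ω <;> simp [hDdef, hfdef, hgdef, h]
    have hAs : MeasurableSet[F s] {ω | s ≤ τ ω} :=
      (F.mono (Nat.sub_le s 1)) _ (hA s hs)
    have hfsm : StronglyMeasurable[F s] f :=
      StronglyMeasurable.ite hAs
        (((hmeas s hst).sub ((hmeas (s-1) ((Nat.sub_le s 1).trans hst)).mono
          (F.mono (Nat.sub_le s 1)))).const_mul sgn)
        stronglyMeasurable_const
    have hfbdd : ∀ᵐ ω ∂μ, ‖f ω‖ ≤ c := by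
      filter_upwards [hbdd s hs hst] with ω hω
      simp only [hfdef, Real.norm_eq_abs]
      by_cases h : s ≤ τ ω
      · rw [if_pos h, habs_sgn, abs_le]
        obtain ⟨h1, h2⟩ := hω
        constructor <;> simp only [hcdef] <;> linarith
      · rw [if_neg h]; simp [hc0.le]
    have hfint : Integrable f μ :=
      (integrable_const c).mono' ((hfsm.mono (F.le s)).aestronglyMeasurable) hfbdd
    have hgsm : StronglyMeasurable[F (s-1)] g :=
      StronglyMeasurable.ite (hA s hs) stronglyMeasurable_const stronglyMeasurable_const
    have hgbdd : ∀ᵐ ω ∂μ, ‖g ω‖ ≤ c := by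
      refine ae_of_all μ fun ω => ?_
      simp only [hgdef, Real.norm_eq_abs]
      by_cases h : s ≤ τ ω
      · rw [if_pos h]; simp [hc0.le]
      · rw [if_neg h, abs_le]
        constructor <;> simp only [hcdef] <;> linarith
    have hgint : Integrable g μ :=
      (integrable_const c).mono'
        ((hgsm.mono (F.le (s-1))).aestronglyMeasurable) hgbdd
    have hadd := condExp_add (m := F (s-1)) hfint hgint
    have hgcond : μ[g | F (s-1)] = g :=
      condExp_of_stronglyMeasurable (F.le (s-1)) hgsm hgint
    have hdft := hdrift s hs hst
    rw [← hfdef] at hdft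
    rw [hfg]
    filter_upwards [hdft, hadd] with ω h1 h2
    calc (μ[f + g | F (s-1)]) ω
        = (μ[f | F (s-1)]) ω + (μ[g | F (s-1)]) ω := h2
      _ ≤ (if s ≤ τ ω then y else 0) + g ω :=
          add_le_add h1 (le_of_eq (by rw [hgcond]))
      _ = y := by by_cases h : s ≤ τ ω <;> simp [hgdef, h, hy0.le]
  -- the mgf parameter
  set l : ℝ := 9 * (-y) / (22 * c^2) with hldef
  have hl0 : 0 < l := by
    apply div_pos (by linarith) (by positivity)
  have hyc : -y ≤ c := by simp only [hcdef]; linarith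
  have hlc : l * c ≤ 1/2 := by
    rw [hldef, div_mul_eq_mul_div, div_le_iff₀ (by positivity)]
    nlinarith
  set β : ℝ := Real.exp (l * y + (11/18) * l^2 * c^2) with hβdef
  have hβ0 : 0 < β := Real.exp_pos _
  -- mgf induction
  -- a.e. bound on Z
  have hZbdd : ∀ s : ℕ, s ≤ t → ∀ᵐ ω ∂μ, |Z s ω| ≤ s * c := by
    intro s hst
    have h1 : ∀ᵐ ω ∂μ, ∀ r : ℕ, r < s → |D (r+1) ω| ≤ c := by
      rw [ae_all_iff]
      intro r
      by_cases hr : r < s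
      · filter_upwards [hDbdd (r+1) (by omega) (by omega)] with ω hω _
        exact hω
      · exact ae_of_all μ fun ω hrs => absurd hrs hr
    filter_upwards [h1] with ω hω
    calc |Z s ω| ≤ ∑ r ∈ Finset.range s, |D (r+1) ω| := by
          simp only [hZdef]; exact Finset.abs_sum_le_sum_abs _ _
      _ ≤ ∑ r ∈ Finset.range s, c :=
          Finset.sum_le_sum fun r hr => hω r (Finset.mem_range.mp hr)
      _ = s * c := by simp [mul_comm]
  have hexpint : ∀ s : ℕ, s ≤ t →
      Integrable (fun ω => Real.exp (l * Z s ω)) μ := by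
    intro s hst
    refine (integrable_const (Real.exp (l * (s * c)))).mono'
      ((Real.continuous_exp.comp_stronglyMeasurable
        (((hZmeas s hst).mono (F.le s)).const_mul l)).aestronglyMeasurable) ?_
    filter_upwards [hZbdd s hst] with ω hω
    rw [Real.norm_eq_abs, abs_of_pos (Real.exp_pos _)]
    exact Real.exp_le_exp.mpr (mul_le_mul_of_nonneg_left ((le_abs_self _).trans hω) hl0.le)
  have hmgf : ∀ s : ℕ, s ≤ t → ∫ ω, Real.exp (l * Z s ω) ∂μ ≤ β ^ s := by
    intro s
    induction s with
    | zero => intro _; simp [hZdef]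
    | succ n ih =>
      intro hst
      have hnt : n ≤ t := by omega
      have ihn := ih hnt
      set G : Ω → ℝ := fun ω => Real.exp (l * Z n ω) with hGdef
      set H : Ω → ℝ := fun ω => Real.exp (l * D (n+1) ω) with hHdef
      have hGsm : StronglyMeasurable[F n] G :=
        Real.continuous_exp.comp_stronglyMeasurable ((hZmeas n hnt).const_mul l)
      have hHsm : StronglyMeasurable[F (n+1)] H :=
        Real.continuous_exp.comp_stronglyMeasurable
          ((hDmeas (n+1) (by omega) hst).const_mul l)
      have hGbdd : ∀ᵐ ω ∂μ, ‖G ω‖ ≤ Real.exp (l * (n * c)) := by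
        filter_upwards [hZbdd n hnt] with ω hω
        rw [hGdef, Real.norm_eq_abs, abs_of_pos (Real.exp_pos _)]
        exact Real.exp_le_exp.mpr
          (mul_le_mul_of_nonneg_left ((le_abs_self _).trans hω) hl0.le)
      have hHbdd : ∀ᵐ ω ∂μ, ‖H ω‖ ≤ Real.exp (l * c) := by
        filter_upwards [hDbdd (n+1) (by omega) hst] with ω hω
        rw [hHdef, Real.norm_eq_abs, abs_of_pos (Real.exp_pos _)]
        exact Real.exp_le_exp.mpr
          (mul_le_mul_of_nonneg_left ((le_abs_self _).trans hω) hl0.le)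
      have hGint : Integrable G μ :=
        (integrable_const _).mono' ((hGsm.mono (F.le n)).aestronglyMeasurable) hGbdd
      have hHint : Integrable H μ :=
        (integrable_const _).mono' ((hHsm.mono (F.le (n+1))).aestronglyMeasurable) hHbdd
      have hGHint : Integrable (G * H) μ := by
        refine (integrable_const (Real.exp (l * (n * c)) * Real.exp (l * c))).mono'
          (((hGsm.mono (F.le n)).aestronglyMeasurable).mul
            ((hHsm.mono (F.le (n+1))).aestronglyMeasurable)) ?_
        filter_upwards [hGbdd, hHbdd] with ω h1 h2
        rw [Pi.mul_apply, norm_mul]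
        exact mul_le_mul h1 h2 (norm_nonneg _) (Real.exp_pos _).le
      have hDint : Integrable (D (n+1)) μ :=
        (integrable_const c).mono'
          (((hDmeas (n+1) (by omega) hst).mono (F.le (n+1))).aestronglyMeasurable)
          (by filter_upwards [hDbdd (n+1) (by omega) hst] with ω hω;
              rwa [Real.norm_eq_abs])
      -- conditional expectation of H is at most β
      set A : ℝ := 1 + (11/18) * l^2 * c^2 with hAdef
      set φ : Ω → ℝ := (fun _ => A) + l • D (n+1) with hφdef
      have hφint : Integrable φ μ := (integrable_const A).add (hDint.smul l)
      have hquad : H ≤ᵐ[μ] φ := by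
        filter_upwards [hDbdd (n+1) (by omega) hst] with ω hω
        have habs : |l * D (n+1) ω| ≤ 1/2 := by
          rw [abs_mul, abs_of_pos hl0]
          calc l * |D (n+1) ω| ≤ l * c := mul_le_mul_of_nonneg_left hω hl0.le
            _ ≤ 1/2 := hlc
        have hq := exp_le_quadratic habs
        have hD2 : (D (n+1) ω)^2 ≤ c^2 := by
          rw [← sq_abs]
          exact pow_le_pow_left₀ (abs_nonneg _) hω 2
        have h2 : (l * D (n+1) ω)^2 ≤ l^2 * c^2 := by
          rw [mul_pow]
          exact mul_le_mul_of_nonneg_left hD2 (sq_nonneg l)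
        simp only [hHdef, hφdef, hAdef, Pi.add_apply, Pi.smul_apply, smul_eq_mul]
        clear_value l c D
        linarith
      have hHcond : μ[H | F n] ≤ᵐ[μ] fun _ => β := by
        have h1 : μ[H | F n] ≤ᵐ[μ] μ[φ | F n] := condExp_mono hHint hφint hquad
        have h2 := condExp_add (m := F n) (integrable_const A) (hDint.smul l)
        have h3 := condExp_smul (m := F n) (μ := μ) l (D (n+1))
        have h4 : μ[(fun _ : Ω => A) | F n] = fun _ => A := condExp_const (F.le n) A
        have h5 := hcond (n+1) (by omega) hst
        rw [Nat.add_sub_cancel] at h5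
        filter_upwards [h1, h2, h3, h5] with ω e1 e2 e3 e5
        have : (μ[φ | F n]) ω ≤ A + l * y := by
          rw [← hφdef] at e2
          rw [e2]
          simp only [Pi.add_apply, h4, Pi.smul_apply, smul_eq_mul] at e3 ⊢
          rw [e3]
          have h6 : l * (μ[D (n+1) | F n]) ω ≤ l * y :=
            mul_le_mul_of_nonneg_left e5 hl0.le
          clear_value l c D
          linarith
        refine (e1.trans this).trans ?_
        rw [hβdef, hAdef]
        have h7 := Real.add_one_le_exp (l * y + (11/18) * l^2 * c^2)
        clear_value l c
        linarith
      have hGH : (fun ω => Real.exp (l * Z (n+1) ω)) = G * H := by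
        funext ω
        have hsum : Z (n+1) ω = Z n ω + D (n+1) ω := by
          simp only [hZdef]; exact Finset.sum_range_succ _ n
        rw [Pi.mul_apply, hGdef, hHdef, hsum, mul_add, Real.exp_add]
      calc ∫ ω, Real.exp (l * Z (n+1) ω) ∂μ
          = ∫ ω, (G * H) ω ∂μ := by rw [hGH]
        _ = ∫ ω, (μ[G * H | F n]) ω ∂μ := (integral_condExp (F.le n)).symm
        _ ≤ ∫ ω, G ω * β ∂μ := by
            refine integral_mono_ae integrable_condExp (hGint.mul_const β) ?_
            have hpull : μ[G * H | F n] =ᵐ[μ] G * μ[H | F n] :=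
              condExp_mul_of_stronglyMeasurable_left hGsm hGHint hHint
            filter_upwards [hpull, hHcond] with ω e1 e2
            rw [e1, Pi.mul_apply]
            exact mul_le_mul_of_nonneg_left e2 (Real.exp_pos _).le
        _ = (∫ ω, G ω ∂μ) * β := integral_mul_const β G
        _ ≤ β ^ n * β := mul_le_mul_of_nonneg_right ihn hβ0.le
        _ = β ^ (n+1) := (pow_succ β n).symm
  -- Chernoff
  rw [hsetZ]
  set ε : ℝ := Real.exp (l * (y * t / 2)) with hεdef
  have hεpos : 0 < ε := Real.exp_pos _
  have hsub : {ω : Ω | y * t / 2 < Z t ω} ⊆ {ω : Ω | ε ≤ Real.exp (l * Z t ω)} := by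
    intro ω hω
    exact Real.exp_le_exp.mpr (mul_le_mul_of_nonneg_left (le_of_lt hω) hl0.le)
  have hmarkov := mul_meas_ge_le_integral_of_nonneg
    (ae_of_all μ fun ω => (Real.exp_pos (l * Z t ω)).le) (hexpint t le_rfl) ε
  have hmono : (μ {ω : Ω | y * t / 2 < Z t ω}).toReal
      ≤ (μ {ω : Ω | ε ≤ Real.exp (l * Z t ω)}).toReal :=
    ENNReal.toReal_mono (measure_ne_top μ _) (measure_mono hsub)
  have hfinal : (μ {ω : Ω | y * t / 2 < Z t ω}).toReal ≤ β ^ t / ε := by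
    rw [le_div_iff₀ hεpos]
    calc (μ {ω : Ω | y * t / 2 < Z t ω}).toReal * ε
        ≤ (μ {ω : Ω | ε ≤ Real.exp (l * Z t ω)}).toReal * ε :=
          mul_le_mul_of_nonneg_right hmono hεpos.le
      _ = ε * (μ {ω : Ω | ε ≤ Real.exp (l * Z t ω)}).toReal := mul_comm _ _
      _ ≤ ∫ ω, Real.exp (l * Z t ω) ∂μ := hmarkov
      _ ≤ β ^ t := hmgf t le_rfl
  refine lt_of_le_of_lt hfinal ?_
  clear_value l c
  have hβt : β ^ t / ε
      = Real.exp ((t : ℝ) * (l * y + (11/18) * l^2 * c^2) - l * (y * t / 2)) := by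
    rw [hβdef, hεdef, ← Real.exp_nat_mul, ← Real.exp_sub]
  rw [hβt]
  apply Real.exp_lt_exp.mpr
  have hexpA : (t : ℝ) * (l * y + (11/18) * l^2 * c^2) - l * (y * t / 2)
      = -(9 * y^2 * t) / (88 * c^2) := by
    rw [hldef]
    field_simp
    ring
  rw [hexpA]
  have htpos : (0 : ℝ) < t := by exact_mod_cast ht1
  have hy2 : 0 < y^2 := by nlinarith [mul_pos_of_neg_of_neg hy0 hy0]
  have hpos : 0 < y^2 * (t:ℝ) * c^2 := mul_pos (mul_pos hy2 htpos) (pow_pos hc0 2)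
  rw [div_lt_div_iff₀ (mul_pos (by norm_num) (pow_pos hc0 2))
    (mul_pos (by norm_num) (pow_pos hc0 2))]
  nlinarith [hpos]
end
end

section
/- For every d̄ ≥ 1 there exists n₀ ∈ ℕ such that for every n ≥ n₀ and every feasible degree sequence D on V = [n] with Σ^D ≤ d̄n, setting S₃ := {u ∈ V : d(u) ≥ n^{4/5}}, the probability that the induced subgraph G^D[S₃] is a complete graph is at least 1 − n^{−1/11}. -/
open Finset

noncomputable section
open scoped Classical

/-- The finset of all simple graphs on `Fin n` realising the degree sequence `D`
(vertex `v` has degree `D v`). -/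
def graphsWithDegreeSeq (n : ℕ) (D : Fin n → ℕ) : Finset (SimpleGraph (Fin n)) :=
  Finset.univ.filter (fun G => ∀ v, G.degree v = D v)

/-- Probability of `A` under the uniform distribution on simple graphs with degree
sequence `D`. -/
def uniformProb (n : ℕ) (D : Fin n → ℕ) (A : SimpleGraph (Fin n) → Prop) : ℝ :=
  (((graphsWithDegreeSeq n D).filter A).card : ℝ) / ((graphsWithDegreeSeq n D).card : ℝ)

namespace CliqueAux

variable {n : ℕ}

def switch (G : SimpleGraph (Fin n)) (u v x y : Fin n) : SimpleGraph (Fin n) where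
  Adj a b := ((G.Adj a b ∨ s(a,b) = s(u,v) ∨ s(a,b) = s(x,y)) ∧
      s(a,b) ≠ s(u,x) ∧ s(a,b) ≠ s(v,y)) ∧ a ≠ b
  symm := by
    constructor
    intro a b h
    obtain ⟨⟨h1, h2, h3⟩, h4⟩ := h
    have e : s(b,a) = s(a,b) := Sym2.eq_swap
    exact ⟨⟨by rw [e]; exact h1.imp (fun hh => hh.symm) id, by rw [e]; exact h2,
      by rw [e]; exact h3⟩, h4.symm⟩
  loopless := ⟨fun a h => h.2 rfl⟩

lemma switch_adj (G : SimpleGraph (Fin n)) (u v x y a b : Fin n) :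
    (switch G u v x y).Adj a b ↔
    ((G.Adj a b ∨ s(a,b) = s(u,v) ∨ s(a,b) = s(x,y)) ∧
      s(a,b) ≠ s(u,x) ∧ s(a,b) ≠ s(v,y)) ∧ a ≠ b := Iff.rfl

structure Good (G : SimpleGraph (Fin n)) (u v x y : Fin n) : Prop where
  huv : u ≠ v
  hux : G.Adj u x
  hvy : G.Adj v y
  nuv : ¬ G.Adj u v
  nxy : ¬ G.Adj x y
  hxy : x ≠ y
  hxv : x ≠ v
  hyu : y ≠ u

section adjlemmas
variable {G : SimpleGraph (Fin n)} {u v x y : Fin n}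

lemma adj_u (h : Good G u v x y) (b : Fin n) :
    (switch G u v x y).Adj u b ↔ (G.Adj u b ∨ b = v) ∧ b ≠ x := by
  obtain ⟨huv, hux, hvy, nuv, nxy, hxy, hxv, hyu⟩ := h
  have e1 := hux.ne
  have e2 := hvy.ne
  have e3 : ∀ c, G.Adj u c → u ≠ c := fun c hc => hc.ne
  rw [switch_adj]
  simp only [Sym2.eq_iff]
  constructor
  · rintro ⟨⟨h1, h2, h3⟩, hne⟩
    aesop
  · intro hb
    aesop

lemma adj_v (h : Good G u v x y) (b : Fin n) :
    (switch G u v x y).Adj v b ↔ (G.Adj v b ∨ b = u) ∧ b ≠ y := by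
  obtain ⟨huv, hux, hvy, nuv, nxy, hxy, hxv, hyu⟩ := h
  have e1 := hux.ne
  have e2 := hvy.ne
  have e3 : ∀ c, G.Adj v c → v ≠ c := fun c hc => hc.ne
  rw [switch_adj]
  simp only [Sym2.eq_iff]
  constructor
  · rintro ⟨⟨h1, h2, h3⟩, hne⟩
    aesop
  · intro hb
    aesop

lemma adj_x (h : Good G u v x y) (b : Fin n) :
    (switch G u v x y).Adj x b ↔ (G.Adj x b ∨ b = y) ∧ b ≠ u := by
  obtain ⟨huv, hux, hvy, nuv, nxy, hxy, hxv, hyu⟩ := h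
  have e1 := hux.ne
  have e2 := hvy.ne
  have e3 : ∀ c, G.Adj x c → x ≠ c := fun c hc => hc.ne
  rw [switch_adj]
  simp only [Sym2.eq_iff]
  constructor
  · rintro ⟨⟨h1, h2, h3⟩, hne⟩
    aesop
  · intro hb
    aesop

lemma adj_y (h : Good G u v x y) (b : Fin n) :
    (switch G u v x y).Adj y b ↔ (G.Adj y b ∨ b = x) ∧ b ≠ v := by
  obtain ⟨huv, hux, hvy, nuv, nxy, hxy, hxv, hyu⟩ := h
  have e1 := hux.ne
  have e2 := hvy.ne
  have e3 : ∀ c, G.Adj y c → y ≠ c := fun c hc => hc.ne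
  rw [switch_adj]
  simp only [Sym2.eq_iff]
  constructor
  · rintro ⟨⟨h1, h2, h3⟩, hne⟩
    aesop
  · intro hb
    aesop

lemma adj_other (h : Good G u v x y) {w : Fin n}
    (hwu : w ≠ u) (hwv : w ≠ v) (hwx : w ≠ x) (hwy : w ≠ y) (b : Fin n) :
    (switch G u v x y).Adj w b ↔ G.Adj w b := by
  obtain ⟨huv, hux, hvy, nuv, nxy, hxy, hxv, hyu⟩ := h
  have e3 : ∀ c, G.Adj w c → w ≠ c := fun c hc => hc.ne
  rw [switch_adj]
  simp only [Sym2.eq_iff]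
  constructor
  · rintro ⟨⟨h1, h2, h3⟩, hne⟩
    aesop
  · intro hb
    aesop

lemma recover (h : Good G u v x y) (a b : Fin n) :
    G.Adj a b ↔ (((switch G u v x y).Adj a b ∨ s(a,b) = s(u,x) ∨ s(a,b) = s(v,y)) ∧
      s(a,b) ≠ s(u,v) ∧ s(a,b) ≠ s(x,y)) := by
  obtain ⟨huv, hux, hvy, nuv, nxy, hxy, hxv, hyu⟩ := h
  have e1 := hux.ne
  have e2 := hvy.ne
  have e1' := hux.symm
  have e2' := hvy.symm
  have n1 : ¬ G.Adj v u := fun hh => nuv hh.symm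
  have n2 : ¬ G.Adj y x := fun hh => nxy hh.symm
  have e3 : ∀ c d, G.Adj c d → c ≠ d := fun c d hc => hc.ne
  rw [switch_adj]
  simp only [Sym2.eq_iff, ne_eq]
  constructor
  · intro hab
    have q1 : ¬((a=u∧b=v)∨(a=v∧b=u)) := by
      rintro (⟨rfl,rfl⟩|⟨rfl,rfl⟩); exacts [nuv hab, n1 hab]
    have q2 : ¬((a=x∧b=y)∨(a=y∧b=x)) := by
      rintro (⟨rfl,rfl⟩|⟨rfl,rfl⟩); exacts [nxy hab, n2 hab]
    refine ⟨?_, q1, q2⟩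
    by_cases p : (a=u∧b=x)∨(a=x∧b=u)
    · exact Or.inr (Or.inl p)
    by_cases q : (a=v∧b=y)∨(a=y∧b=v)
    · exact Or.inr (Or.inr q)
    · exact Or.inl ⟨⟨Or.inl hab, p, q⟩, e3 a b hab⟩
  · rintro ⟨h1 | h1 | h1, h2, h3⟩
    · rcases h1.1.1 with h | h | h
      · exact h
      · exact absurd h h2
      · exact absurd h h3
    · rcases h1 with ⟨rfl,rfl⟩|⟨rfl,rfl⟩
      · exact hux
      · exact e1'
    · rcases h1 with ⟨rfl,rfl⟩|⟨rfl,rfl⟩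
      · exact hvy
      · exact e2'

lemma switch_injective {G₁ G₂ : SimpleGraph (Fin n)} {u v x y : Fin n}
    (h₁ : Good G₁ u v x y) (h₂ : Good G₂ u v x y)
    (heq : switch G₁ u v x y = switch G₂ u v x y) : G₁ = G₂ := by
  ext a b
  rw [recover h₁ a b, recover h₂ a b, heq]

lemma deg_eq (G : SimpleGraph (Fin n)) (w : Fin n) :
    G.degree w = (G.neighborFinset w).card := rfl

lemma nbr_u' (h : Good G u v x y) :
    (switch G u v x y).neighborFinset u = insert v ((G.neighborFinset u).erase x) := by
  have hvx : v ≠ x := fun e => h.hxv e.symm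
  ext b
  simp only [SimpleGraph.mem_neighborFinset, adj_u h, mem_insert, mem_erase]
  constructor
  · rintro ⟨hb | rfl, hbx⟩
    · exact Or.inr ⟨hbx, hb⟩
    · exact Or.inl rfl
  · rintro (rfl | ⟨hbx, hb⟩)
    · exact ⟨Or.inr rfl, hvx⟩
    · exact ⟨Or.inl hb, hbx⟩

lemma nbr_v' (h : Good G u v x y) :
    (switch G u v x y).neighborFinset v = insert u ((G.neighborFinset v).erase y) := by
  have huy : u ≠ y := fun e => h.hyu e.symm
  ext b
  simp only [SimpleGraph.mem_neighborFinset, adj_v h, mem_insert, mem_erase]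
  constructor
  · rintro ⟨hb | rfl, hby⟩
    · exact Or.inr ⟨hby, hb⟩
    · exact Or.inl rfl
  · rintro (rfl | ⟨hby, hb⟩)
    · exact ⟨Or.inr rfl, huy⟩
    · exact ⟨Or.inl hb, hby⟩

lemma nbr_x' (h : Good G u v x y) :
    (switch G u v x y).neighborFinset x = insert y ((G.neighborFinset x).erase u) := by
  have hyu : y ≠ u := h.hyu
  ext b
  simp only [SimpleGraph.mem_neighborFinset, adj_x h, mem_insert, mem_erase]
  constructor
  · rintro ⟨hb | rfl, hbu⟩
    · exact Or.inr ⟨hbu, hb⟩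
    · exact Or.inl rfl
  · rintro (rfl | ⟨hbu, hb⟩)
    · exact ⟨Or.inr rfl, hyu⟩
    · exact ⟨Or.inl hb, hbu⟩

lemma nbr_y' (h : Good G u v x y) :
    (switch G u v x y).neighborFinset y = insert x ((G.neighborFinset y).erase v) := by
  have hxv : x ≠ v := h.hxv
  ext b
  simp only [SimpleGraph.mem_neighborFinset, adj_y h, mem_insert, mem_erase]
  constructor
  · rintro ⟨hb | rfl, hbv⟩
    · exact Or.inr ⟨hbv, hb⟩
    · exact Or.inl rfl
  · rintro (rfl | ⟨hbv, hb⟩)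
    · exact ⟨Or.inr rfl, hxv⟩
    · exact ⟨Or.inl hb, hbv⟩

lemma switch_degree (h : Good G u v x y) (w : Fin n) :
    (switch G u v x y).degree w = G.degree w := by
  by_cases hwu : w = u
  · subst hwu
    rw [deg_eq, deg_eq, nbr_u' h]
    have hx : x ∈ G.neighborFinset w := (SimpleGraph.mem_neighborFinset _ _ _).mpr h.hux
    have hv : v ∉ (G.neighborFinset w).erase x := by
      intro hc
      exact h.nuv ((SimpleGraph.mem_neighborFinset _ _ _).mp (Finset.mem_of_mem_erase hc))
    rw [Finset.card_insert_of_notMem hv, Finset.card_erase_of_mem hx]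
    have : 0 < (G.neighborFinset w).card := Finset.card_pos.mpr ⟨x, hx⟩
    omega
  by_cases hwv : w = v
  · subst hwv
    rw [deg_eq, deg_eq, nbr_v' h]
    have hy : y ∈ G.neighborFinset w := (SimpleGraph.mem_neighborFinset _ _ _).mpr h.hvy
    have hu : u ∉ (G.neighborFinset w).erase y := by
      intro hc
      exact h.nuv (((SimpleGraph.mem_neighborFinset _ _ _).mp (Finset.mem_of_mem_erase hc)).symm)
    rw [Finset.card_insert_of_notMem hu, Finset.card_erase_of_mem hy]
    have : 0 < (G.neighborFinset w).card := Finset.card_pos.mpr ⟨y, hy⟩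
    omega
  by_cases hwx : w = x
  · subst hwx
    rw [deg_eq, deg_eq, nbr_x' h]
    have hu : u ∈ G.neighborFinset w := (SimpleGraph.mem_neighborFinset _ _ _).mpr h.hux.symm
    have hy : y ∉ (G.neighborFinset w).erase u := by
      intro hc
      exact h.nxy ((SimpleGraph.mem_neighborFinset _ _ _).mp (Finset.mem_of_mem_erase hc))
    rw [Finset.card_insert_of_notMem hy, Finset.card_erase_of_mem hu]
    have : 0 < (G.neighborFinset w).card := Finset.card_pos.mpr ⟨u, hu⟩
    omega
  by_cases hwy : w = y
  · subst hwy
    rw [deg_eq, deg_eq, nbr_y' h]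
    have hv : v ∈ G.neighborFinset w := (SimpleGraph.mem_neighborFinset _ _ _).mpr h.hvy.symm
    have hx : x ∉ (G.neighborFinset w).erase v := by
      intro hc
      exact h.nxy (((SimpleGraph.mem_neighborFinset _ _ _).mp (Finset.mem_of_mem_erase hc)).symm)
    rw [Finset.card_insert_of_notMem hx, Finset.card_erase_of_mem hv]
    have : 0 < (G.neighborFinset w).card := Finset.card_pos.mpr ⟨v, hv⟩
    omega
  · rw [deg_eq, deg_eq]
    congr 1
    ext b
    simp only [SimpleGraph.mem_neighborFinset, adj_other h hwu hwv hwx hwy]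

lemma switch_adj_uv (h : Good G u v x y) : (switch G u v x y).Adj u v :=
  (adj_u h v).mpr ⟨Or.inr rfl, fun e => h.hxv e.symm⟩

lemma switch_adj_xy (h : Good G u v x y) : (switch G u v x y).Adj x y :=
  (adj_x h y).mpr ⟨Or.inr rfl, h.hyu⟩

end adjlemmas

lemma card_filter_product {α β : Type*} (s : Finset α) (t : Finset β) (p : α × β → Prop) :
    ((s ×ˢ t).filter p).card = ∑ a ∈ s, (t.filter (fun b => p (a, b))).card := by
  rw [Finset.card_filter, Finset.sum_product]
  refine Finset.sum_congr rfl fun a _ => ?_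
  rw [Finset.card_filter]

lemma adj_pairs_count (G : SimpleGraph (Fin n)) :
    (((univ : Finset (Fin n)) ×ˢ (univ : Finset (Fin n))).filter
      (fun q => G.Adj q.1 q.2)).card = ∑ w, G.degree w := by
  rw [card_filter_product]
  refine Finset.sum_congr rfl (fun w _ => ?_)
  rw [deg_eq, SimpleGraph.neighborFinset_eq_filter]

lemma key_count (D : Fin n → ℕ) (u v : Fin n) (huv : u ≠ v) :
    ((graphsWithDegreeSeq n D).filter (fun G => ¬ G.Adj u v)).card * ((D u - 1) * (D v - 1)) ≤
      ((graphsWithDegreeSeq n D).filter (fun G => G.Adj u v)).card * (∑ i, D i) +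
      ((graphsWithDegreeSeq n D).filter (fun G => ¬ G.Adj u v)).card * (n + ∑ i, D i) := by
  set 𝒢 := graphsWithDegreeSeq n D with h𝒢
  set A := 𝒢.filter (fun G => ¬ G.Adj u v) with hA
  set B := 𝒢.filter (fun G => G.Adj u v) with hB
  have hdeg : ∀ G ∈ 𝒢, ∀ w, G.degree w = D w := by
    intro G hG
    exact (Finset.mem_filter.mp hG).2
  obtain ⟨valid, hvalid⟩ : ∃ V : SimpleGraph (Fin n) → Fin n × Fin n → Prop, ∀ G p,
      V G p ↔ (G.Adj u p.1 ∧ G.Adj v p.2 ∧ p.1 ≠ v ∧ p.2 ≠ u ∧ p.1 ≠ p.2 ∧ ¬ G.Adj p.1 p.2) :=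
    ⟨_, fun G p => Iff.rfl⟩
  have hgood : ∀ G p, G ∈ A → valid G p → Good G u v p.1 p.2 := by
    intro G p hGA hv0
    have hv := (hvalid G p).mp hv0
    have hG := Finset.mem_filter.mp hGA
    exact ⟨huv, hv.1, hv.2.1, hG.2, hv.2.2.2.2.2, hv.2.2.2.2.1, hv.2.2.1, hv.2.2.2.1⟩
  set T : Finset (Fin n × Fin n) := univ ×ˢ univ with hT
  set P := (A ×ˢ T).filter (fun q => valid q.1 q.2) with hP
  set Q := (B ×ˢ T).filter (fun q => q.1.Adj q.2.1 q.2.2) with hQ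
  -- cardinality of Q
  have hQcard : Q.card = B.card * (∑ i, D i) := by
    have key : ∀ G ∈ B, ((T.filter (fun b : Fin n × Fin n => G.Adj b.1 b.2)).card) = ∑ i, D i := by
      intro G hG
      rw [hT, adj_pairs_count G]
      exact Finset.sum_congr rfl fun w _ => hdeg G (Finset.mem_filter.mp hG).1 w
    rw [hQ, card_filter_product]
    exact (Finset.sum_congr rfl key).trans (by rw [Finset.sum_const, smul_eq_mul])
  -- injection from P to Q
  have hPQ : P.card ≤ Q.card := by
    apply Finset.card_le_card_of_injOn (fun q => (switch q.1 u v q.2.1 q.2.2, q.2))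
    · rintro ⟨G, p⟩ hq
      obtain ⟨hmem, hval⟩ := Finset.mem_filter.mp hq
      obtain ⟨hGA, hpT⟩ := Finset.mem_product.mp hmem
      have hg : Good G u v p.1 p.2 := hgood G p hGA hval
      have hG𝒢 : G ∈ 𝒢 := (Finset.mem_filter.mp hGA).1
      have hs𝒢 : switch G u v p.1 p.2 ∈ 𝒢 := by
        rw [h𝒢, graphsWithDegreeSeq]
        exact Finset.mem_filter.mpr ⟨Finset.mem_univ _,
          fun w => (switch_degree hg w).trans (hdeg G hG𝒢 w)⟩
      refine Finset.mem_filter.mpr ⟨Finset.mem_product.mpr ⟨?_, hpT⟩, switch_adj_xy hg⟩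
      exact Finset.mem_filter.mpr ⟨hs𝒢, switch_adj_uv hg⟩
    · rintro ⟨G₁, p₁⟩ h₁ ⟨G₂, p₂⟩ h₂ heq
      have hp : p₁ = p₂ := congrArg Prod.snd heq
      subst hp
      have hG : switch G₁ u v p₁.1 p₁.2 = switch G₂ u v p₁.1 p₁.2 := congrArg Prod.fst heq
      obtain ⟨hm₁, hv₁⟩ := Finset.mem_filter.mp h₁
      obtain ⟨hm₂, hv₂⟩ := Finset.mem_filter.mp h₂
      have hg₁ := hgood G₁ p₁ (Finset.mem_product.mp hm₁).1 hv₁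
      have hg₂ := hgood G₂ p₁ (Finset.mem_product.mp hm₂).1 hv₂
      exact Prod.ext (switch_injective hg₁ hg₂ hG) rfl
  -- per-graph lower bound
  have hlow : ∀ G ∈ A, (D u - 1) * (D v - 1) ≤ (T.filter (valid G)).card + n + ∑ i, D i := by
    intro G hGA
    have hG𝒢 : G ∈ 𝒢 := (Finset.mem_filter.mp hGA).1
    set Nu := (G.neighborFinset u).erase v with hNu
    set Nv := (G.neighborFinset v).erase u with hNv
    have hsub : Nu ×ˢ Nv ⊆ ((Nu ×ˢ Nv).filter (fun p => valid G p)) ∪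
        ((Nu ×ˢ Nv).filter (fun p => p.1 = p.2)) ∪
        ((Nu ×ˢ Nv).filter (fun p => G.Adj p.1 p.2)) := by
      intro p hp
      simp only [Finset.mem_union, Finset.mem_filter]
      by_cases h1 : p.1 = p.2
      · exact Or.inl (Or.inr ⟨hp, h1⟩)
      by_cases h2 : G.Adj p.1 p.2
      · exact Or.inr ⟨hp, h2⟩
      · left; left
        have hp' := Finset.mem_product.mp hp
        have h3 := Finset.mem_erase.mp hp'.1
        have h4 := Finset.mem_erase.mp hp'.2
        exact ⟨hp, (hvalid G p).mpr ⟨(SimpleGraph.mem_neighborFinset _ _ _).mp h3.2,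
          (SimpleGraph.mem_neighborFinset _ _ _).mp h4.2, h3.1, h4.1, h1, h2⟩⟩
    have c1 : ((Nu ×ˢ Nv).filter (fun p => valid G p)).card ≤ (T.filter (valid G)).card := by
      apply Finset.card_le_card
      apply Finset.filter_subset_filter
      rw [hT]
      intro p _
      exact Finset.mem_product.mpr ⟨Finset.mem_univ _, Finset.mem_univ _⟩
    have c2 : ((Nu ×ˢ Nv).filter (fun p => p.1 = p.2)).card ≤ n := by
      have := Finset.card_le_card_of_injOn (f := fun p : Fin n × Fin n => p.1)
        (fun p _ => Finset.mem_univ p.1) (t := (univ : Finset (Fin n)))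
        (s := (Nu ×ˢ Nv).filter (fun p => p.1 = p.2)) ?_
      · simpa using this
      · intro p hp q hq hpq
        have hp1 := (Finset.mem_filter.mp hp).2
        have hq1 := (Finset.mem_filter.mp hq).2
        have hpq' : p.1 = q.1 := hpq
        exact Prod.ext hpq' (by rw [← hp1, ← hq1]; exact hpq')
    have c3 : ((Nu ×ˢ Nv).filter (fun p => G.Adj p.1 p.2)).card ≤ ∑ i, D i := by
      have hsub2 : ((Nu ×ˢ Nv).filter (fun p => G.Adj p.1 p.2)) ⊆
          (T.filter (fun p => G.Adj p.1 p.2)) := by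
        apply Finset.filter_subset_filter
        rw [hT]
        intro p _
        exact Finset.mem_product.mpr ⟨Finset.mem_univ _, Finset.mem_univ _⟩
      refine (Finset.card_le_card hsub2).trans ?_
      rw [hT, adj_pairs_count G]
      exact le_of_eq (Finset.sum_congr rfl fun w _ => hdeg G hG𝒢 w)
    have hcard : (D u - 1) * (D v - 1) ≤ (Nu ×ˢ Nv).card := by
      rw [Finset.card_product]
      apply Nat.mul_le_mul
      · have := Finset.pred_card_le_card_erase (a := v) (s := G.neighborFinset u)
        rw [← deg_eq, hdeg G hG𝒢 u] at this
        exact this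
      · have := Finset.pred_card_le_card_erase (a := u) (s := G.neighborFinset v)
        rw [← deg_eq, hdeg G hG𝒢 v] at this
        exact this
    have := (hcard.trans (Finset.card_le_card hsub)).trans
      ((Finset.card_union_le _ _).trans (Nat.add_le_add_right (Finset.card_union_le _ _) _))
    omega
  -- assemble
  have hsum : A.card * ((D u - 1) * (D v - 1)) ≤ P.card + A.card * (n + ∑ i, D i) := by
    have h1 : A.card * ((D u - 1) * (D v - 1)) = ∑ _G ∈ A, (D u - 1) * (D v - 1) := by
      rw [Finset.sum_const, smul_eq_mul]
    have h2 : ∑ G ∈ A, ((T.filter (valid G)).card + (n + ∑ i, D i)) =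
        P.card + A.card * (n + ∑ i, D i) := by
      have h2' : ∑ G ∈ A, (T.filter (valid G)).card = P.card := by
        rw [hP]
        exact (card_filter_product A T (fun q => valid q.1 q.2)).symm
      rw [Finset.sum_add_distrib, Finset.sum_const, smul_eq_mul, h2']
    rw [h1, ← h2]
    apply Finset.sum_le_sum
    intro G hG
    have := hlow G hG
    omega
  calc A.card * ((D u - 1) * (D v - 1)) ≤ P.card + A.card * (n + ∑ i, D i) := hsum
    _ ≤ Q.card + A.card * (n + ∑ i, D i) := by omega
    _ = B.card * (∑ i, D i) + A.card * (n + ∑ i, D i) := by rw [hQcard]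

lemma Acard_bound (D : Fin n → ℕ) (dbar : ℝ) (hdbar : 1 ≤ dbar) (hn : 1 ≤ n)
    (hne : (graphsWithDegreeSeq n D).Nonempty)
    (hD1 : ∀ w, 1 ≤ D w)
    (hsum : (∑ i, (D i : ℝ)) ≤ dbar * n)
    (hbig : 8 * dbar * (n : ℝ) ≤ (n : ℝ) ^ ((8 : ℝ)/5))
    (u v : Fin n) (huv : u ≠ v)
    (hu : (n : ℝ) ^ ((4 : ℝ)/5) ≤ (D u : ℝ)) (hv : (n : ℝ) ^ ((4 : ℝ)/5) ≤ (D v : ℝ)) :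
    (((graphsWithDegreeSeq n D).filter (fun G => ¬ G.Adj u v)).card : ℝ) ≤
      2 * dbar * (n : ℝ) ^ (-(3 : ℝ)/5) * ((graphsWithDegreeSeq n D).card : ℝ) := by
  have hn0 : (0 : ℝ) < n := by exact_mod_cast hn
  set a := ((graphsWithDegreeSeq n D).filter (fun G => ¬ G.Adj u v)).card with ha
  set b := ((graphsWithDegreeSeq n D).filter (fun G => G.Adj u v)).card with hb
  set g := (graphsWithDegreeSeq n D).card with hg
  -- degrees at most n
  obtain ⟨G₀, hG₀⟩ := hne
  have hdeg₀ := (Finset.mem_filter.mp hG₀).2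
  have hDun : (D u : ℝ) ≤ n := by
    have h := SimpleGraph.degree_lt_card_verts (G := G₀) u
    rw [hdeg₀ u, Fintype.card_fin] at h
    exact_mod_cast h.le
  have hDvn : (D v : ℝ) ≤ n := by
    have h := SimpleGraph.degree_lt_card_verts (G := G₀) v
    rw [hdeg₀ v, Fintype.card_fin] at h
    exact_mod_cast h.le
  -- the counting inequality, in ℝ
  have key := key_count D u v huv
  have keyR : (a : ℝ) * (((D u : ℝ) - 1) * ((D v : ℝ) - 1)) ≤
      (b : ℝ) * (∑ i, (D i : ℝ)) + (a : ℝ) * ((n : ℝ) + ∑ i, (D i : ℝ)) := by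
    have := (Nat.cast_le (α := ℝ)).mpr key
    push_cast [Nat.cast_sub (hD1 u), Nat.cast_sub (hD1 v)] at this
    exact this
  have hbg : (b : ℝ) ≤ (g : ℝ) := by
    exact_mod_cast Finset.card_le_card (Finset.filter_subset _ _)
  have ha0 : (0 : ℝ) ≤ (a : ℝ) := Nat.cast_nonneg a
  have hg0 : (0 : ℝ) ≤ (g : ℝ) := Nat.cast_nonneg g
  have hsum0 : (0 : ℝ) ≤ ∑ i, (D i : ℝ) :=
    Finset.sum_nonneg fun i _ => Nat.cast_nonneg _
  have hE : (n : ℝ) ^ ((8 : ℝ)/5) ≤ (D u : ℝ) * (D v : ℝ) := by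
    have h45 : (0:ℝ) ≤ (n : ℝ) ^ ((4 : ℝ)/5) := Real.rpow_nonneg hn0.le _
    calc (n : ℝ) ^ ((8 : ℝ)/5) = (n : ℝ) ^ ((4 : ℝ)/5) * (n : ℝ) ^ ((4 : ℝ)/5) := by
          rw [← Real.rpow_add hn0]; norm_num
      _ ≤ (D u : ℝ) * (D v : ℝ) := by
          exact mul_le_mul hu hv h45 (le_trans h45 hu)
  -- a * (du*dv/2) ≤ g * (dbar * n)
  have step : (a : ℝ) * ((D u : ℝ) * (D v : ℝ) / 2) ≤ (g : ℝ) * (dbar * n) := by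
    have h1 : (a : ℝ) * ((D u : ℝ) * (D v : ℝ) / 2) ≤
        (a : ℝ) * (((D u : ℝ) - 1) * ((D v : ℝ) - 1) - (n : ℝ) - ∑ i, (D i : ℝ)) := by
      apply mul_le_mul_of_nonneg_left _ ha0
      have h8 : 8 * dbar * (n : ℝ) ≤ (D u : ℝ) * (D v : ℝ) := hbig.trans hE
      nlinarith [hsum, hdbar, hn0, hDun, hDvn]
    have h2 : (b : ℝ) * (∑ i, (D i : ℝ)) ≤ (g : ℝ) * (dbar * n) := by
      apply mul_le_mul hbg hsum hsum0 hg0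
    nlinarith [keyR]
  -- conclude
  have hEpos : (0 : ℝ) < (n : ℝ) ^ ((8 : ℝ)/5) := Real.rpow_pos_of_pos hn0 _
  have hDuv0 : (0 : ℝ) < (D u : ℝ) * (D v : ℝ) := lt_of_lt_of_le hEpos hE
  have hfin : (n : ℝ) ^ (-(3 : ℝ)/5) * (n : ℝ) ^ ((8 : ℝ)/5) = (n : ℝ) := by
    rw [← Real.rpow_add hn0]
    norm_num
  -- a * du*dv ≤ 2 * g * dbar * n and du*dv ≥ n^{8/5}
  have final : (a : ℝ) * (n : ℝ) ^ ((8 : ℝ)/5) ≤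
      2 * dbar * (n : ℝ) ^ (-(3 : ℝ)/5) * (g : ℝ) * (n : ℝ) ^ ((8 : ℝ)/5) := by
    have l1 : (a : ℝ) * (n : ℝ) ^ ((8 : ℝ)/5) ≤ (a : ℝ) * ((D u : ℝ) * (D v : ℝ)) :=
      mul_le_mul_of_nonneg_left hE ha0
    have l2 : 2 * dbar * (n : ℝ) ^ (-(3 : ℝ)/5) * (g : ℝ) * (n : ℝ) ^ ((8 : ℝ)/5) =
        2 * ((g : ℝ) * (dbar * n)) := by
      rw [show 2 * dbar * (n : ℝ) ^ (-(3 : ℝ)/5) * (g : ℝ) * (n : ℝ) ^ ((8 : ℝ)/5) =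
        2 * dbar * (g : ℝ) * ((n : ℝ) ^ (-(3 : ℝ)/5) * (n : ℝ) ^ ((8 : ℝ)/5)) by ring, hfin]
      ring
    rw [l2]
    nlinarith [step, l1]
  exact le_of_mul_le_mul_right final hEpos

lemma prob_lower (D : Fin n → ℕ) (Ev : SimpleGraph (Fin n) → Prop) (ε : ℝ)
    (hne : (graphsWithDegreeSeq n D).Nonempty)
    (hbad : (((graphsWithDegreeSeq n D).filter (fun G => ¬ Ev G)).card : ℝ) ≤
      ε * ((graphsWithDegreeSeq n D).card : ℝ)) :
    1 - ε ≤ uniformProb n D Ev := by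
  have hg0 : (0 : ℝ) < ((graphsWithDegreeSeq n D).card : ℝ) := by
    exact_mod_cast Finset.card_pos.mpr hne
  rw [uniformProb, le_div_iff₀ hg0]
  have hsplit : ((graphsWithDegreeSeq n D).filter Ev).card +
      ((graphsWithDegreeSeq n D).filter (fun G => ¬ Ev G)).card =
      (graphsWithDegreeSeq n D).card :=
    Finset.card_filter_add_card_filter_not (p := Ev)
  have hc : (((graphsWithDegreeSeq n D).filter Ev).card : ℝ) +
      (((graphsWithDegreeSeq n D).filter (fun G => ¬ Ev G)).card : ℝ) =
      ((graphsWithDegreeSeq n D).card : ℝ) := by exact_mod_cast hsplit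
  nlinarith [hbad, hg0]

end CliqueAux

/-- **Lemma (the vertices of degree at least `n^{4/5}` typically form a clique).** -/
theorem high_degree_vertices_clique :
    ∀ dbar : ℝ, 1 ≤ dbar →
    ∃ n₀ : ℕ, ∀ n : ℕ, n₀ ≤ n →
    ∀ D : Fin n → ℕ, (∀ w, 1 ≤ D w) →
    (graphsWithDegreeSeq n D).Nonempty →
    (∑ i, (D i : ℝ)) ≤ dbar * n →
    1 - (n : ℝ) ^ (-(1 : ℝ) / 11) ≤
      uniformProb n D (fun G => ∀ u v : Fin n,
        (n : ℝ) ^ ((4 : ℝ) / 5) ≤ (D u : ℝ) → (n : ℝ) ^ ((4 : ℝ) / 5) ≤ (D v : ℝ) →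
        u ≠ v → G.Adj u v) := by
  intro dbar hdbar
  refine ⟨⌈(8 * dbar ^ 3) ^ ((55 : ℝ)/6)⌉₊ + 1, ?_⟩
  intro n hn D hD1 hne hsum
  have hd3 : dbar ≤ dbar ^ 3 := by nlinarith [mul_nonneg (mul_nonneg (by linarith : (0:ℝ) ≤ dbar)
    (by linarith : (0:ℝ) ≤ dbar - 1)) (by linarith : (0:ℝ) ≤ dbar + 1)]
  have hC1 : (1 : ℝ) ≤ 8 * dbar ^ 3 := by nlinarith [hd3]
  have hC0 : (0 : ℝ) ≤ 8 * dbar ^ 3 := by linarith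
  have hn1 : 1 ≤ n := le_trans (Nat.le_add_left 1 _) hn
  have hn1R : (1 : ℝ) ≤ (n : ℝ) := by exact_mod_cast hn1
  have hn0 : (0 : ℝ) < (n : ℝ) := lt_of_lt_of_le one_pos hn1R
  have hnn : (8 * dbar ^ 3) ^ ((55 : ℝ)/6) ≤ (n : ℝ) := by
    have h1 : ((8 * dbar ^ 3) ^ ((55 : ℝ)/6)) ≤ (⌈(8 * dbar ^ 3) ^ ((55 : ℝ)/6)⌉₊ : ℝ) :=
      Nat.le_ceil _
    have h2 : ((⌈(8 * dbar ^ 3) ^ ((55 : ℝ)/6)⌉₊ : ℕ) : ℝ) ≤ (n : ℝ) := by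
      exact_mod_cast le_trans (Nat.le_succ _) hn
    linarith
  have h655 : 8 * dbar ^ 3 ≤ (n : ℝ) ^ ((6 : ℝ)/55) := by
    have h := Real.rpow_le_rpow (Real.rpow_nonneg hC0 _) hnn (by norm_num : (0 : ℝ) ≤ 6/55)
    rwa [← Real.rpow_mul hC0, show ((55 : ℝ)/6) * (6/55) = 1 by norm_num, Real.rpow_one] at h
  have h35 : (n : ℝ) ^ ((6 : ℝ)/55) ≤ (n : ℝ) ^ ((3 : ℝ)/5) :=
    Real.rpow_le_rpow_of_exponent_le hn1R (by norm_num)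
  have hbig : 8 * dbar * (n : ℝ) ≤ (n : ℝ) ^ ((8 : ℝ)/5) := by
    have h8d : 8 * dbar ≤ (n : ℝ) ^ ((3 : ℝ)/5) :=
      le_trans (by nlinarith [hd3]) (le_trans h655 h35)
    calc 8 * dbar * (n : ℝ) ≤ (n : ℝ) ^ ((3 : ℝ)/5) * (n : ℝ) :=
          mul_le_mul_of_nonneg_right h8d hn0.le
      _ = (n : ℝ) ^ ((8 : ℝ)/5) := by
          rw [show ((8 : ℝ)/5) = 3/5 + 1 by norm_num, Real.rpow_add hn0, Real.rpow_one]
  apply CliqueAux.prob_lower _ _ _ hne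
  -- union bound on the bad set
  set 𝒢 := graphsWithDegreeSeq n D with h𝒢
  have hg0 : (0 : ℝ) < (𝒢.card : ℝ) := by
    exact_mod_cast Finset.card_pos.mpr hne
  set H : Finset (Fin n) := univ.filter (fun u => (n : ℝ) ^ ((4 : ℝ)/5) ≤ (D u : ℝ)) with hH
  set Pairs : Finset (Fin n × Fin n) := (H ×ˢ H).filter (fun p => p.1 ≠ p.2) with hPairs
  have hsubset : 𝒢.filter (fun G => ¬ (∀ u v : Fin n,
      (n : ℝ) ^ ((4 : ℝ) / 5) ≤ (D u : ℝ) → (n : ℝ) ^ ((4 : ℝ) / 5) ≤ (D v : ℝ) →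
      u ≠ v → G.Adj u v)) ⊆
      Pairs.biUnion (fun p => 𝒢.filter (fun G => ¬ G.Adj p.1 p.2)) := by
    intro G hG
    have hG𝒢 : G ∈ 𝒢 := (Finset.mem_filter.mp hG).1
    have hnEv : ¬ (∀ u v : Fin n,
      (n : ℝ) ^ ((4 : ℝ) / 5) ≤ (D u : ℝ) → (n : ℝ) ^ ((4 : ℝ) / 5) ≤ (D v : ℝ) →
      u ≠ v → G.Adj u v) := (Finset.mem_filter.mp hG).2
    push_neg at hnEv
    obtain ⟨u, v, hu, hv, huv, hnadj⟩ := hnEv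
    refine Finset.mem_biUnion.mpr ⟨(u, v), ?_, Finset.mem_filter.mpr ⟨hG𝒢, hnadj⟩⟩
    refine Finset.mem_filter.mpr ⟨Finset.mem_product.mpr ⟨?_, ?_⟩, huv⟩
    · exact Finset.mem_filter.mpr ⟨Finset.mem_univ _, hu⟩
    · exact Finset.mem_filter.mpr ⟨Finset.mem_univ _, hv⟩
  have hcard1 : (𝒢.filter (fun G => ¬ (∀ u v : Fin n,
      (n : ℝ) ^ ((4 : ℝ) / 5) ≤ (D u : ℝ) → (n : ℝ) ^ ((4 : ℝ) / 5) ≤ (D v : ℝ) →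
      u ≠ v → G.Adj u v))).card ≤
      ∑ p ∈ Pairs, (𝒢.filter (fun G => ¬ G.Adj p.1 p.2)).card :=
    (Finset.card_le_card hsubset).trans (Finset.card_biUnion_le)
  -- per-pair bound
  have hper : ∀ p ∈ Pairs, ((𝒢.filter (fun G => ¬ G.Adj p.1 p.2)).card : ℝ) ≤
      2 * dbar * (n : ℝ) ^ (-(3 : ℝ)/5) * (𝒢.card : ℝ) := by
    intro p hp
    obtain ⟨hmem, hne'⟩ := Finset.mem_filter.mp hp
    obtain ⟨h1, h2⟩ := Finset.mem_product.mp hmem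
    exact CliqueAux.Acard_bound D dbar hdbar hn1 hne hD1 hsum hbig p.1 p.2 hne'
      (Finset.mem_filter.mp h1).2 (Finset.mem_filter.mp h2).2
  -- number of high-degree vertices
  have hHcard : (H.card : ℝ) ≤ dbar * (n : ℝ) ^ ((1 : ℝ)/5) := by
    have h45pos : (0 : ℝ) < (n : ℝ) ^ ((4 : ℝ)/5) := Real.rpow_pos_of_pos hn0 _
    have hlb : (H.card : ℝ) * (n : ℝ) ^ ((4 : ℝ)/5) ≤ ∑ i, (D i : ℝ) := by
      have h1 : H.card • ((n : ℝ) ^ ((4 : ℝ)/5)) ≤ ∑ u ∈ H, (D u : ℝ) :=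
        Finset.card_nsmul_le_sum H _ _ (fun x hx => (Finset.mem_filter.mp hx).2)
      have h2 : ∑ u ∈ H, (D u : ℝ) ≤ ∑ i, (D i : ℝ) :=
        Finset.sum_le_sum_of_subset_of_nonneg (Finset.subset_univ H)
          (fun i _ _ => Nat.cast_nonneg _)
      rw [nsmul_eq_mul] at h1
      linarith
    have heq : dbar * (n : ℝ) ^ ((1 : ℝ)/5) * (n : ℝ) ^ ((4 : ℝ)/5) = dbar * (n : ℝ) := by
      rw [mul_assoc, ← Real.rpow_add hn0]
      norm_num
    have hfin : (H.card : ℝ) * (n : ℝ) ^ ((4 : ℝ)/5) ≤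
        dbar * (n : ℝ) ^ ((1 : ℝ)/5) * (n : ℝ) ^ ((4 : ℝ)/5) := by
      rw [heq]; linarith
    exact le_of_mul_le_mul_right hfin h45pos
  have hPairsCard : (Pairs.card : ℝ) ≤ (H.card : ℝ) * (H.card : ℝ) := by
    have h := Finset.card_le_card (s := Pairs) (Finset.filter_subset _ _)
    rw [Finset.card_product] at h
    exact_mod_cast h
  -- assemble
  have hbadR : ((𝒢.filter (fun G => ¬ (∀ u v : Fin n,
      (n : ℝ) ^ ((4 : ℝ) / 5) ≤ (D u : ℝ) → (n : ℝ) ^ ((4 : ℝ) / 5) ≤ (D v : ℝ) →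
      u ≠ v → G.Adj u v))).card : ℝ) ≤
      (Pairs.card : ℝ) * (2 * dbar * (n : ℝ) ^ (-(3 : ℝ)/5) * (𝒢.card : ℝ)) := by
    have hc1 : ((𝒢.filter (fun G => ¬ (∀ u v : Fin n,
        (n : ℝ) ^ ((4 : ℝ) / 5) ≤ (D u : ℝ) → (n : ℝ) ^ ((4 : ℝ) / 5) ≤ (D v : ℝ) →
        u ≠ v → G.Adj u v))).card : ℝ) ≤
        ∑ p ∈ Pairs, ((𝒢.filter (fun G => ¬ G.Adj p.1 p.2)).card : ℝ) := by
      exact_mod_cast hcard1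
    refine hc1.trans ?_
    have h := Finset.sum_le_card_nsmul Pairs _ _ hper
    rwa [nsmul_eq_mul] at h
  have hrpow1 : (n : ℝ) ^ ((1 : ℝ)/5) * (n : ℝ) ^ ((1 : ℝ)/5) * (n : ℝ) ^ (-(3 : ℝ)/5) =
      (n : ℝ) ^ (-(1 : ℝ)/5) := by
    rw [← Real.rpow_add hn0, ← Real.rpow_add hn0]
    norm_num
  have hrpow2 : (n : ℝ) ^ ((6 : ℝ)/55) * (n : ℝ) ^ (-(1 : ℝ)/5) = (n : ℝ) ^ (-(1 : ℝ)/11) := by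
    rw [← Real.rpow_add hn0]
    norm_num
  have hHpos : (0 : ℝ) ≤ (H.card : ℝ) := Nat.cast_nonneg _
  have hrm15 : (0 : ℝ) ≤ (n : ℝ) ^ (-(1 : ℝ)/5) := (Real.rpow_pos_of_pos hn0 _).le
  have hchain : (Pairs.card : ℝ) * (2 * dbar * (n : ℝ) ^ (-(3 : ℝ)/5) * (𝒢.card : ℝ)) ≤
      (n : ℝ) ^ (-(1 : ℝ) / 11) * (𝒢.card : ℝ) := by
    have hP2 : (Pairs.card : ℝ) ≤
        (dbar * (n : ℝ) ^ ((1 : ℝ)/5)) * (dbar * (n : ℝ) ^ ((1 : ℝ)/5)) :=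
      hPairsCard.trans (mul_le_mul hHcard hHcard hHpos (by positivity))
    have step1 : (Pairs.card : ℝ) * (2 * dbar * (n : ℝ) ^ (-(3 : ℝ)/5) * (𝒢.card : ℝ)) ≤
        ((dbar * (n : ℝ) ^ ((1 : ℝ)/5)) * (dbar * (n : ℝ) ^ ((1 : ℝ)/5))) *
          (2 * dbar * (n : ℝ) ^ (-(3 : ℝ)/5) * (𝒢.card : ℝ)) := by
      apply mul_le_mul_of_nonneg_right hP2
      positivity
    have step2 : ((dbar * (n : ℝ) ^ ((1 : ℝ)/5)) * (dbar * (n : ℝ) ^ ((1 : ℝ)/5))) *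
          (2 * dbar * (n : ℝ) ^ (-(3 : ℝ)/5) * (𝒢.card : ℝ)) =
        (2 * dbar ^ 3 * (n : ℝ) ^ (-(1 : ℝ)/5)) * (𝒢.card : ℝ) := by
      rw [← hrpow1]; ring
    have step3 : (2 * dbar ^ 3 * (n : ℝ) ^ (-(1 : ℝ)/5)) ≤ (n : ℝ) ^ (-(1 : ℝ)/11) := by
      rw [← hrpow2]
      have h2d : 2 * dbar ^ 3 ≤ (n : ℝ) ^ ((6 : ℝ)/55) := le_trans (by nlinarith [hd3]) h655
      exact mul_le_mul_of_nonneg_right h2d hrm15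
    calc (Pairs.card : ℝ) * (2 * dbar * (n : ℝ) ^ (-(3 : ℝ)/5) * (𝒢.card : ℝ)) ≤
          (2 * dbar ^ 3 * (n : ℝ) ^ (-(1 : ℝ)/5)) * (𝒢.card : ℝ) := by
          rw [← step2]; exact step1
      _ ≤ (n : ℝ) ^ (-(1 : ℝ)/11) * (𝒢.card : ℝ) :=
          mul_le_mul_of_nonneg_right step3 hg0.le
  have hfinal := hbadR.trans hchain
  convert hfinal using 4
  rfl
end
end

section
/- For every d̄ ≥ 1 there exists n₀ ∈ ℕ such that the following holds for every n ≥ n₀. Let D be a feasible degree sequence on V = [n] with Σ^D ≤ d̄n, set S₂ := {u ∈ V : d(u) ≥ n^{1/3}} and S₃ := {u ∈ V : d(u) ≥ n^{4/5}}, and assume |S₃| ≥ 100. Then the probability that there exists a vertex u ∈ S₂∖S₃ that is not adjacent in G^D to any vertex of S₃ is at most 1/n. -/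
open Finset

noncomputable section
open scoped Classical

set_option linter.unusedSectionVars false
set_option maxHeartbeats 1000000

namespace MidSwitch
variable {V : Type*} [Fintype V] [DecidableEq V]

def pe (a b p q : V) : Prop := (p = a ∧ q = b) ∨ (p = b ∧ q = a)

lemma pe_symm {a b p q : V} : pe a b q p ↔ pe a b p q := by unfold pe; tauto

def tog (u w v x p q : V) : Prop :=
  pe u w p q ∨ pe v x p q ∨ pe u v p q ∨ pe w x p q

lemma tog_symm {u w v x p q : V} : tog u w v x q p ↔ tog u w v x p q := by
  unfold tog; simp [pe_symm]

def switched (G : SimpleGraph V) (u w v x : V) : SimpleGraph V where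
  Adj p q := p ≠ q ∧ ¬ (G.Adj p q ↔ tog u w v x p q)
  symm := by
    constructor
    intro p q h
    refine ⟨Ne.symm h.1, ?_⟩
    rw [G.adj_comm, tog_symm]
    exact h.2
  loopless := by constructor; intro p h; exact h.1 rfl

lemma switched_adj {G : SimpleGraph V} {u w v x p q : V} :
    (switched G u w v x).Adj p q ↔ (p ≠ q ∧ ¬ (G.Adj p q ↔ tog u w v x p q)) := Iff.rfl

lemma switched_inj {G₁ G₂ : SimpleGraph V} {u w v x : V}
    (h : switched G₁ u w v x = switched G₂ u w v x) : G₁ = G₂ := by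
  ext p q
  by_cases hpq : p = q
  · subst hpq; simp
  · have h2 : (switched G₁ u w v x).Adj p q ↔ (switched G₂ u w v x).Adj p q := by rw [h]
    simp only [switched_adj, hpq, ne_eq, not_false_eq_true, true_and] at h2
    tauto

/-- generic neighbourhood computation at a vertex `p` whose toggled partners are
exactly `a` (currently adjacent) and `b` (currently non-adjacent). -/
lemma nbhd_toggle {G : SimpleGraph V} {u w v x : V} (p a b : V)
    (ha : G.Adj p a) (hb : ¬ G.Adj p b) (hpb : p ≠ b)
    (htog : ∀ q, tog u w v x p q ↔ (q = a ∨ q = b)) :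
    (switched G u w v x).neighborFinset p
      = insert b ((G.neighborFinset p).erase a) := by
  ext q
  simp only [SimpleGraph.mem_neighborFinset, switched_adj, htog, mem_insert, mem_erase]
  by_cases hqa : q = a
  · subst hqa
    have hab : q ≠ b := fun h => hb (h ▸ ha)
    simp [ha, hab]
  · by_cases hqb : q = b
    · subst hqb
      simp [hb, hpb]
    · have : ∀ h : G.Adj p q, p ≠ q := fun h => G.ne_of_adj h
      simp [hqa, hqb]
      tauto

lemma nbhd_untouched {G : SimpleGraph V} {u w v x : V} (p : V)
    (hp : ∀ q, ¬ tog u w v x p q) :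
    (switched G u w v x).neighborFinset p = G.neighborFinset p := by
  ext q
  simp only [SimpleGraph.mem_neighborFinset, switched_adj, hp]
  have : ∀ h : G.Adj p q, p ≠ q := fun h => G.ne_of_adj h
  tauto

lemma deg_toggle {G : SimpleGraph V} {u w v x : V} (p a b : V)
    (ha : G.Adj p a) (hb : ¬ G.Adj p b) (hpb : p ≠ b)
    (htog : ∀ q, tog u w v x p q ↔ (q = a ∨ q = b)) :
    (switched G u w v x).degree p = G.degree p := by
  have hbn : b ∉ (G.neighborFinset p).erase a := by
    simp [SimpleGraph.mem_neighborFinset, hb]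
  have han : a ∈ G.neighborFinset p := by simp [SimpleGraph.mem_neighborFinset, ha]
  rw [SimpleGraph.degree, nbhd_toggle p a b ha hb hpb htog, card_insert_of_notMem hbn,
    card_erase_of_mem han, SimpleGraph.degree]
  have : 0 < (G.neighborFinset p).card := card_pos.mpr ⟨a, han⟩
  omega

section ctx
variable {G : SimpleGraph V} {u w v x : V}
variable (huw : G.Adj u w) (hvx : G.Adj v x) (huv : ¬ G.Adj u v) (hwx : ¬ G.Adj w x)
variable (hux : u ≠ x) (hwv : w ≠ v) (hwx' : w ≠ x) (huv' : u ≠ v)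

include huw hvx huv hwx hux hwv hwx' huv'

lemma tog_at_u : ∀ q, tog u w v x u q ↔ (q = w ∨ q = v) := by
  have h1 : u ≠ w := G.ne_of_adj huw
  have h2 : v ≠ x := G.ne_of_adj hvx
  intro q; unfold tog pe; constructor
  · rintro (⟨_,_⟩|⟨_,_⟩|⟨_,_⟩|⟨_,_⟩|⟨_,_⟩|⟨_,_⟩|⟨_,_⟩|⟨_,_⟩) <;> tauto
  · rintro (rfl|rfl) <;> tauto

lemma tog_at_w : ∀ q, tog u w v x w q ↔ (q = u ∨ q = x) := by
  have h1 : u ≠ w := G.ne_of_adj huw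
  have h2 : v ≠ x := G.ne_of_adj hvx
  intro q; unfold tog pe; constructor
  · rintro (⟨_,_⟩|⟨_,_⟩|⟨_,_⟩|⟨_,_⟩|⟨_,_⟩|⟨_,_⟩|⟨_,_⟩|⟨_,_⟩) <;> tauto
  · rintro (rfl|rfl) <;> tauto

lemma tog_at_v : ∀ q, tog u w v x v q ↔ (q = x ∨ q = u) := by
  have h1 : u ≠ w := G.ne_of_adj huw
  have h2 : v ≠ x := G.ne_of_adj hvx
  intro q; unfold tog pe; constructor
  · rintro (⟨_,_⟩|⟨_,_⟩|⟨_,_⟩|⟨_,_⟩|⟨_,_⟩|⟨_,_⟩|⟨_,_⟩|⟨_,_⟩) <;> tauto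
  · rintro (rfl|rfl) <;> tauto

lemma tog_at_x : ∀ q, tog u w v x x q ↔ (q = v ∨ q = w) := by
  have h1 : v ≠ x := G.ne_of_adj hvx
  have h2 : u ≠ w := G.ne_of_adj huw
  intro q; unfold tog pe; constructor
  · rintro (⟨_,_⟩|⟨_,_⟩|⟨_,_⟩|⟨_,_⟩|⟨_,_⟩|⟨_,_⟩|⟨_,_⟩|⟨_,_⟩) <;> tauto
  · rintro (rfl|rfl) <;> tauto

omit huw hvx huv hwx hux hwv hwx' huv' in
lemma tog_at_other (p : V) (h1 : p ≠ u) (h2 : p ≠ w) (h3 : p ≠ v) (h4 : p ≠ x) :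
    ∀ q, ¬ tog u w v x p q := by
  intro q; unfold tog pe
  rintro (⟨_,_⟩|⟨_,_⟩|⟨_,_⟩|⟨_,_⟩|⟨_,_⟩|⟨_,_⟩|⟨_,_⟩|⟨_,_⟩) <;> tauto

lemma switched_degree (p : V) :
    (switched G u w v x).degree p = G.degree p := by
  by_cases hpu : p = u
  · subst hpu
    exact deg_toggle p w v huw huv huv' (tog_at_u huw hvx huv hwx hux hwv hwx' huv')
  by_cases hpw : p = w
  · subst hpw
    exact deg_toggle p u x huw.symm hwx hwx' (tog_at_w huw hvx huv hwx hux hwv hwx' huv')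
  by_cases hpv : p = v
  · subst hpv
    exact deg_toggle p x u hvx (fun h => huv h.symm) (fun h => huv' h.symm)
      (tog_at_v huw hvx huv hwx hux hwv hwx' huv')
  by_cases hpx : p = x
  · subst hpx
    exact deg_toggle p v w hvx.symm (fun h => hwx h.symm) (fun h => hwx' h.symm)
      (tog_at_x huw hvx huv hwx hux hwv hwx' huv')
  · rw [SimpleGraph.degree, nbhd_untouched p (tog_at_other p hpu hpw hpv hpx),
      SimpleGraph.degree]

lemma switched_nbhd_u :
    (switched G u w v x).neighborFinset u = insert v ((G.neighborFinset u).erase w) :=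
  nbhd_toggle u w v huw huv huv' (tog_at_u huw hvx huv hwx hux hwv hwx' huv')

lemma switched_adj_uv : (switched G u w v x).Adj u v := by
  refine ⟨huv', fun h => huv (h.mpr ?_)⟩
  exact Or.inr (Or.inr (Or.inl (Or.inl ⟨rfl, rfl⟩)))

lemma switched_adj_wx : (switched G u w v x).Adj w x := by
  refine ⟨hwx', fun h => hwx (h.mpr ?_)⟩
  exact Or.inr (Or.inr (Or.inr (Or.inl ⟨rfl, rfl⟩)))

end ctx


variable {α β : Type*} [Fintype α] [Fintype β] [DecidableEq α] [DecidableEq β]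

lemma card_filter_prod (p : α × β → Prop) :
    ((univ : Finset (α × β)).filter p).card
      = ∑ a : α, ((univ : Finset β).filter fun b => p (a, b)).card := by
  classical
  rw [Finset.card_eq_sum_card_fiberwise (f := Prod.fst) (t := univ) (fun x _ => mem_univ _)]
  refine Finset.sum_congr rfl fun a _ => ?_
  refine Finset.card_nbij' (i := Prod.snd) (j := fun b => (a, b)) ?_ ?_ ?_ ?_
  · rintro ⟨a', b⟩ h
    simp only [mem_coe, mem_filter, mem_univ, true_and] at h ⊢
    rcases h with ⟨h1, rfl⟩
    exact h1
  · intro b h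
    simp only [mem_coe, mem_filter, mem_univ, true_and] at h ⊢
    simp [h]
  · rintro ⟨a', b⟩ h
    simp only [mem_coe, mem_filter] at h
    simp [h.2]
  · intro b h; rfl

lemma sum_filter_swap (s : Finset α) (t : Finset β) (R : α → β → Prop) :
    ∑ a ∈ s, (t.filter (R a)).card = ∑ b ∈ t, (s.filter fun a => R a b).card := by
  classical
  simp only [Finset.card_filter]
  exact Finset.sum_comm

def S3f (n : ℕ) (D : Fin n → ℕ) (b : ℝ) : Finset (Fin n) :=
  univ.filter fun v => b ≤ (D v : ℝ)

def fwdP (n : ℕ) (D : Fin n → ℕ) (b L : ℝ) (u : Fin n) (G : SimpleGraph (Fin n))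
    (t : Fin n × Fin n × Fin n) : Prop :=
  b ≤ (D t.1 : ℝ) ∧ ¬ G.Adj u t.1 ∧ t.1 ≠ u ∧
  G.Adj u t.2.1 ∧ ¬ (b ≤ (D t.2.1 : ℝ)) ∧
  G.Adj t.1 t.2.2 ∧ ¬ G.Adj t.2.1 t.2.2 ∧ t.2.2 ≠ u ∧ t.2.2 ≠ t.2.1 ∧ (D t.2.2 : ℝ) ≤ L

def Tt (n : ℕ) (D : Fin n → ℕ) (b L : ℝ) (u : Fin n) (G : SimpleGraph (Fin n)) :
    Finset (Fin n × Fin n × Fin n) :=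
  univ.filter (fwdP n D b L u G)

lemma forward_count (n : ℕ) (D : Fin n → ℕ) (a b L : ℝ)
    (ha : 40 ≤ a) (hb : 8 ≤ b) (hL0 : 0 ≤ L) (hLa : L ≤ a / 16)
    (hHigh : (((univ : Finset (Fin n)).filter fun y => L < (D y : ℝ)).card : ℝ) ≤ b / 2)
    (hS3 : 100 ≤ (S3f n D b).card)
    (u : Fin n) (hua : a ≤ (D u : ℝ)) (k : ℕ) (hk : k ≤ 19)
    (G : SimpleGraph (Fin n)) (hG : ∀ p, G.degree p = D p)
    (hGk : ((S3f n D b).filter fun v => G.Adj u v).card = k) :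
    5 * a * b ≤ ((Tt n D b L u G).card : ℝ) := by
  set W : Finset (Fin n) := (G.neighborFinset u).filter (fun w => ¬ (b ≤ (D w : ℝ))) with hW
  -- |W| = D u - k
  have hWk : (W.card : ℕ) + k = D u := by
    have hsplit := Finset.card_filter_add_card_filter_not
      (s := G.neighborFinset u) (p := fun w => b ≤ (D w : ℝ))
    have heq : (G.neighborFinset u).filter (fun w => b ≤ (D w : ℝ))
        = (S3f n D b).filter (fun v => G.Adj u v) := by
      ext q; simp [S3f, SimpleGraph.mem_neighborFinset, and_comm]
    have hdeg : (G.neighborFinset u).card = D u := hG u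
    rw [heq, hGk] at hsplit
    beta_reduce at hsplit
    rw [← hW, hdeg] at hsplit
    omega
  have hm : a / 2 ≤ (W.card : ℝ) := by
    have : (W.card : ℝ) = (D u : ℝ) - k := by
      have := hWk
      push_cast [← this]
      ring
    rw [this]
    have : (k : ℝ) ≤ 19 := by exact_mod_cast hk
    linarith
  have hm0 : (0:ℝ) < W.card := by linarith
  -- V'
  set V' : Finset (Fin n) := (S3f n D b).filter (fun v => ¬ G.Adj u v ∧ v ≠ u) with hV'
  have hV'card : 80 ≤ V'.card := by
    have hsplit := Finset.card_filter_add_card_filter_not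
      (s := S3f n D b) (p := fun v => ¬ G.Adj u v ∧ v ≠ u)
    beta_reduce at hsplit
    rw [← hV'] at hsplit
    have hsub : (S3f n D b).filter (fun v => ¬(¬ G.Adj u v ∧ v ≠ u))
        ⊆ ((S3f n D b).filter (fun v => G.Adj u v)) ∪ {u} := by
      intro q hq
      rw [mem_filter] at hq
      obtain ⟨h1, h2⟩ := hq
      rw [mem_union, mem_filter, mem_singleton]
      by_cases hqu : q = u
      · exact Or.inr hqu
      · refine Or.inl ⟨h1, ?_⟩
        by_contra hadj
        exact h2 ⟨hadj, hqu⟩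
    have hle : ((S3f n D b).filter (fun v => ¬(¬ G.Adj u v ∧ v ≠ u))).card ≤ k + 1 := by
      calc ((S3f n D b).filter (fun v => ¬(¬ G.Adj u v ∧ v ≠ u))).card
          ≤ (((S3f n D b).filter (fun v => G.Adj u v)) ∪ {u}).card := card_le_card hsub
        _ ≤ ((S3f n D b).filter (fun v => G.Adj u v)).card + 1 := by
            refine (card_union_le _ _).trans ?_
            simp
        _ = k + 1 := by rw [hGk]
    omega
  -- decompose the cardinality of Tt as an iterated sum
  have hTt : (Tt n D b L u G).card
      = ∑ v : Fin n, ∑ w : Fin n,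
          ((univ : Finset (Fin n)).filter
            (fun x => fwdP n D b L u G (v, w, x))).card := by
    rw [Tt, card_filter_prod]
    refine Finset.sum_congr rfl fun v _ => ?_
    exact card_filter_prod (fun e => fwdP n D b L u G (v, e.1, e.2))
  -- the inner x-set for good v, w
  have hinner : ∀ v ∈ V', ∀ w ∈ W,
      (univ : Finset (Fin n)).filter (fun x => fwdP n D b L u G (v, w, x))
        = ((G.neighborFinset v).filter (fun x => (D x : ℝ) ≤ L))
            \ ((G.neighborFinset w) ∪ {u, w}) := by
    intro v hv w hw
    rw [hV', mem_filter] at hv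
    obtain ⟨hv1, hv3, hv4⟩ := hv
    rw [hW, mem_filter, SimpleGraph.mem_neighborFinset] at hw
    ext x
    rw [mem_filter]
    simp only [mem_filter, mem_univ, true_and, mem_sdiff, mem_union, mem_insert,
      mem_singleton, SimpleGraph.mem_neighborFinset, fwdP]
    rw [S3f, mem_filter] at hv1
    constructor
    · rintro ⟨_, _, _, _, _, h6, h7, h8, h9, h10⟩
      exact ⟨⟨h6, h10⟩, by tauto⟩
    · rintro ⟨⟨h6, h10⟩, h7⟩
      push_neg at h7
      exact ⟨hv1.2, hv3, hv4, hw.1, hw.2, h6, h7.1, h7.2.1, h7.2.2, h10⟩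
  -- lower bound the x-count, summed over w ∈ W, for each v ∈ V'
  have hperv : ∀ v ∈ V',
      a * b / 16 ≤ ∑ w ∈ W, (((univ : Finset (Fin n)).filter
          (fun x => fwdP n D b L u G (v, w, x))).card : ℝ) := by
    intro v hv
    have hvS3 : b ≤ (D v : ℝ) := by
      rw [hV', mem_filter, S3f, mem_filter] at hv
      exact hv.1.2
    set A : Finset (Fin n) := (G.neighborFinset v).filter (fun x => (D x : ℝ) ≤ L) with hA
    have hAsubcard : (A.card : ℝ) ≤ (D v : ℝ) := by
      have h5 := card_le_card (filter_subset (fun x => (D x : ℝ) ≤ L) (G.neighborFinset v))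
      rw [SimpleGraph.card_neighborFinset_eq_degree, hG v] at h5
      exact_mod_cast h5
    -- |A| ≥ D v - b/2
    have hAcard : (D v : ℝ) - b / 2 ≤ (A.card : ℝ) := by
      have hsplit := Finset.card_filter_add_card_filter_not
        (s := G.neighborFinset v) (p := fun x => (D x : ℝ) ≤ L)
      have hsub : (G.neighborFinset v).filter (fun x => ¬ ((D x : ℝ) ≤ L))
          ⊆ (univ : Finset (Fin n)).filter (fun y => L < (D y : ℝ)) := by
        intro q hq
        rw [mem_filter] at hq ⊢
        exact ⟨mem_univ _, lt_of_not_ge hq.2⟩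
      have h2 : (((G.neighborFinset v).filter (fun x => ¬ ((D x : ℝ) ≤ L))).card : ℝ)
          ≤ b / 2 := le_trans (by exact_mod_cast card_le_card hsub) hHigh
      have hdeg : (G.neighborFinset v).card = D v := by
        rw [SimpleGraph.card_neighborFinset_eq_degree, hG v]
      beta_reduce at hsplit
      rw [← hA] at hsplit
      have h3 : (A.card : ℝ)
          + (((G.neighborFinset v).filter (fun x => ¬ ((D x : ℝ) ≤ L))).card : ℝ)
          = (D v : ℝ) := by
        rw [← hdeg, ← hsplit]
        push_cast
        ring
      linarith
    -- codegree sum bound : ∑_{w ∈ W} |A ∩ N(w)| ≤ D v * L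
    have hcodeg : ∑ w ∈ W, ((A ∩ G.neighborFinset w).card : ℝ) ≤ (D v : ℝ) * L := by
      have hinter : ∀ w, A ∩ G.neighborFinset w = A.filter (fun x => G.Adj w x) := by
        intro w
        ext q
        simp only [hA, mem_inter, mem_filter, SimpleGraph.mem_neighborFinset]
        try tauto
      have h0 : ∑ w ∈ W, (A ∩ G.neighborFinset w).card
          = ∑ x ∈ A, (W.filter (fun w => G.Adj w x)).card := by
        simp_rw [hinter]
        exact sum_filter_swap W A (fun w x => G.Adj w x)
      have hxbound : ∀ x ∈ A, ((W.filter (fun w => G.Adj w x)).card : ℝ) ≤ L := by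
        intro x hx
        have hsub : W.filter (fun w => G.Adj w x) ⊆ G.neighborFinset x := by
          intro q hq
          rw [mem_filter] at hq
          rw [SimpleGraph.mem_neighborFinset]
          exact hq.2.symm
        have h1 : ((W.filter (fun w => G.Adj w x)).card : ℝ) ≤ (D x : ℝ) := by
          have h6 := card_le_card hsub
          rw [SimpleGraph.card_neighborFinset_eq_degree, hG x] at h6
          exact_mod_cast h6
        have h2 : (D x : ℝ) ≤ L := by
          rw [hA, mem_filter] at hx
          exact hx.2
        linarith
      calc ∑ w ∈ W, ((A ∩ G.neighborFinset w).card : ℝ)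
          = ∑ x ∈ A, ((W.filter (fun w => G.Adj w x)).card : ℝ) := by
            exact_mod_cast congrArg (fun m : ℕ => (m : ℝ)) h0
        _ ≤ ∑ x ∈ A, L := Finset.sum_le_sum hxbound
        _ = (A.card : ℝ) * L := by rw [Finset.sum_const, nsmul_eq_mul]
        _ ≤ (D v : ℝ) * L := mul_le_mul_of_nonneg_right hAsubcard hL0
    -- pointwise lower bound for each w ∈ W
    have hxw : ∀ w ∈ W, (A.card : ℝ) - ((A ∩ G.neighborFinset w).card : ℝ) - 2
        ≤ (((univ : Finset (Fin n)).filter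
            (fun x => fwdP n D b L u G (v, w, x))).card : ℝ) := by
      intro w hw
      rw [hinner v hv w hw]
      set B : Finset (Fin n) := G.neighborFinset w ∪ {u, w} with hB
      have e1 : (A \ B).card + (A ∩ B).card = A.card := Finset.card_sdiff_add_card_inter A B
      have e2 : (A ∩ B).card ≤ (A ∩ G.neighborFinset w).card + 2 := by
        have : A ∩ B = (A ∩ G.neighborFinset w) ∪ (A ∩ ({u, w} : Finset (Fin n))) := by
          rw [hB, Finset.inter_union_distrib_left]
        rw [this]
        refine (card_union_le _ _).trans ?_
        have : (A ∩ ({u, w} : Finset (Fin n))).card ≤ 2 := by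
          refine (card_le_card (inter_subset_right)).trans ?_
          refine (Finset.card_insert_le _ _).trans ?_
          simp
        omega
      have e1' : ((A \ B).card : ℝ) + ((A ∩ B).card : ℝ) = (A.card : ℝ) := by
        exact_mod_cast congrArg (fun m : ℕ => (m : ℝ)) e1
      have e2' : ((A ∩ B).card : ℝ) ≤ ((A ∩ G.neighborFinset w).card : ℝ) + 2 := by
        exact_mod_cast e2
      linarith
    -- sum over w ∈ W
    have hsumW : (W.card : ℝ) * ((A.card : ℝ) - 2) - (D v : ℝ) * L
        ≤ ∑ w ∈ W, (((univ : Finset (Fin n)).filter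
            (fun x => fwdP n D b L u G (v, w, x))).card : ℝ) := by
      have h7 : ∑ w ∈ W, ((A.card : ℝ) - ((A ∩ G.neighborFinset w).card : ℝ) - 2)
          ≤ ∑ w ∈ W, (((univ : Finset (Fin n)).filter
            (fun x => fwdP n D b L u G (v, w, x))).card : ℝ) := Finset.sum_le_sum hxw
      have h8 : ∑ w ∈ W, ((A.card : ℝ) - ((A ∩ G.neighborFinset w).card : ℝ) - 2)
          = (W.card : ℝ) * ((A.card : ℝ) - 2)
            - ∑ w ∈ W, ((A ∩ G.neighborFinset w).card : ℝ) := by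
        rw [Finset.sum_sub_distrib, Finset.sum_sub_distrib, Finset.sum_const,
          Finset.sum_const, nsmul_eq_mul, nsmul_eq_mul]
        ring
      linarith
    -- numeric conclusion for this v
    have hd : b ≤ (D v : ℝ) := hvS3
    have hL16 : L ≤ a / 16 := hLa
    nlinarith [hsumW, hm, hAcard, hd, hb, ha, hL0, hL16, hAsubcard,
      mul_le_mul_of_nonneg_right hm (le_of_lt (show (0:ℝ) < (D v : ℝ) - b/2 - 2 by nlinarith)),
      mul_le_mul_of_nonneg_left hL16 (le_trans (by linarith : (0:ℝ) ≤ b) hd)]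
  -- assemble
  have hNat : ∑ v ∈ V', ∑ w ∈ W,
      ((univ : Finset (Fin n)).filter (fun x => fwdP n D b L u G (v, w, x))).card
      ≤ (Tt n D b L u G).card := by
    rw [hTt]
    refine le_trans ?_ (Finset.sum_le_sum_of_subset (subset_univ V'))
    refine Finset.sum_le_sum fun v _ => ?_
    exact Finset.sum_le_sum_of_subset (subset_univ W)
  have hReal : ∑ v ∈ V', (a * b / 16)
      ≤ ((Tt n D b L u G).card : ℝ) := by
    refine le_trans (Finset.sum_le_sum hperv) ?_
    have : ∑ v ∈ V', ∑ w ∈ W, (((univ : Finset (Fin n)).filter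
        (fun x => fwdP n D b L u G (v, w, x))).card : ℝ)
        = ((∑ v ∈ V', ∑ w ∈ W, ((univ : Finset (Fin n)).filter
            (fun x => fwdP n D b L u G (v, w, x))).card : ℕ) : ℝ) := by
      push_cast
      rfl
    rw [this]
    exact_mod_cast hNat
  rw [Finset.sum_const, nsmul_eq_mul] at hReal
  have hV'real : (80 : ℝ) ≤ (V'.card : ℝ) := by exact_mod_cast hV'card
  have hab : (0:ℝ) ≤ a * b / 16 := by positivity
  nlinarith [hReal, hV'real, hab]



def Mk (n : ℕ) (D : Fin n → ℕ) (b : ℝ) (u : Fin n) (k : ℕ) : Finset (SimpleGraph (Fin n)) :=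
  (graphsWithDegreeSeq n D).filter
    (fun G => ((S3f n D b).filter (fun v => G.Adj u v)).card = k)

def Bt (n : ℕ) (D : Fin n → ℕ) (b : ℝ) (u : Fin n) (G' : SimpleGraph (Fin n)) :
    Finset (Fin n × Fin n × Fin n) :=
  ((S3f n D b).filter (fun v => G'.Adj u v))
    ×ˢ ((univ : Finset (Fin n × Fin n)).filter fun e => G'.Adj e.1 e.2)

lemma Bt_card (n : ℕ) (D : Fin n → ℕ) (dbar b : ℝ)
    (hsum : (∑ i, (D i : ℝ)) ≤ dbar * n) (u : Fin n) (k : ℕ) (hk : k ≤ 19)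
    (G' : SimpleGraph (Fin n)) (hG' : G' ∈ Mk n D b u (k+1)) :
    ((Bt n D b u G').card : ℝ) ≤ 20 * (dbar * n) := by
  rw [Mk, mem_filter, graphsWithDegreeSeq, mem_filter] at hG'
  obtain ⟨⟨-, hdeg⟩, hcnt⟩ := hG'
  rw [Bt, card_product, hcnt]
  have h2 : (((univ : Finset (Fin n × Fin n)).filter fun e => G'.Adj e.1 e.2).card : ℝ)
      ≤ dbar * n := by
    rw [card_filter_prod (fun e : Fin n × Fin n => G'.Adj e.1 e.2)]
    have : ∀ p : Fin n, ((univ : Finset (Fin n)).filter (fun q => G'.Adj p q)).card = D p := by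
      intro p
      have hfe : (univ : Finset (Fin n)).filter (fun q => G'.Adj p q)
          = G'.neighborFinset p := by
        ext q; simp [SimpleGraph.mem_neighborFinset]
      rw [hfe, SimpleGraph.card_neighborFinset_eq_degree, hdeg p]
    push_cast
    calc (∑ p : Fin n, (((univ : Finset (Fin n)).filter (fun q => G'.Adj p q)).card : ℝ))
        = ∑ p : Fin n, ((D p : ℕ) : ℝ) := by
          refine Finset.sum_congr rfl fun p _ => ?_
          exact_mod_cast congrArg (fun m : ℕ => (m : ℝ)) (this p)
      _ ≤ dbar * n := hsum
  have h3 : ((k:ℝ) + 1) ≤ 20 := by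
    have : (k:ℝ) ≤ 19 := by exact_mod_cast hk
    linarith
  have h4 : (0:ℝ) ≤ ((univ : Finset (Fin n × Fin n)).filter fun e => G'.Adj e.1 e.2).card :=
    Nat.cast_nonneg _
  push_cast
  nlinarith [h2, h3, h4]

lemma step (n : ℕ) (D : Fin n → ℕ) (dbar a b L : ℝ)
    (ha : 40 ≤ a) (hb : 8 ≤ b) (hL0 : 0 ≤ L) (hLa : L ≤ a / 16)
    (hHigh : (((univ : Finset (Fin n)).filter fun y => L < (D y : ℝ)).card : ℝ) ≤ b / 2)
    (hS3 : 100 ≤ (S3f n D b).card)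
    (hsum : (∑ i, (D i : ℝ)) ≤ dbar * n)
    (u : Fin n) (hua : a ≤ (D u : ℝ)) (hub : (D u : ℝ) < b)
    (k : ℕ) (hk : k ≤ 19) :
    5 * a * b * ((Mk n D b u k).card : ℝ)
      ≤ 20 * (dbar * n) * ((Mk n D b u (k+1)).card : ℝ) := by
  classical
  have habn : (0:ℝ) ≤ 5 * a * b := by nlinarith
  set Fsig := (Mk n D b u k).sigma (fun G => Tt n D b L u G) with hFsig
  set Bsig := (Mk n D b u (k+1)).sigma (fun G' => Bt n D b u G') with hBsig
  -- lower bound on Fsig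
  have h1 : 5 * a * b * ((Mk n D b u k).card : ℝ) ≤ (Fsig.card : ℝ) := by
    rw [hFsig, Finset.card_sigma]
    push_cast
    calc 5 * a * b * ((Mk n D b u k).card : ℝ)
        = ∑ _G ∈ Mk n D b u k, 5 * a * b := by rw [Finset.sum_const, nsmul_eq_mul]; ring
      _ ≤ ∑ G ∈ Mk n D b u k, ((Tt n D b L u G).card : ℝ) := by
          refine Finset.sum_le_sum fun G hG => ?_
          rw [Mk, mem_filter, graphsWithDegreeSeq, mem_filter] at hG
          exact forward_count n D a b L ha hb hL0 hLa hHigh hS3 u hua k hk G hG.1.2 hG.2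
  -- injection from Fsig into Bsig
  have h2 : Fsig.card ≤ Bsig.card := by
    refine Finset.card_le_card_of_injOn
      (fun s => ⟨switched s.1 u s.2.2.1 s.2.1 s.2.2.2, s.2⟩) ?_ ?_
    · rintro ⟨G, t⟩ hmem
      rw [hFsig, Finset.mem_coe, Finset.mem_sigma] at hmem
      obtain ⟨hGmem, htmem⟩ := hmem
      rw [Mk, mem_filter, graphsWithDegreeSeq, mem_filter] at hGmem
      obtain ⟨⟨-, hGdeg⟩, hGk⟩ := hGmem
      rw [Tt, mem_filter] at htmem
      obtain ⟨-, hfwd⟩ := htmem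
      obtain ⟨hbv, hnuv, hvneu, huw, hbw, hvx, hwx, hxu, hxw, hxL⟩ := hfwd
      set v := t.1 with hv
      set w := t.2.1 with hw
      set x := t.2.2 with hx
      have huv' : u ≠ v := Ne.symm hvneu
      have hux : u ≠ x := Ne.symm hxu
      have hwv : w ≠ v := by
        intro h
        exact hbw (h ▸ hbv)
      have hwx' : w ≠ x := Ne.symm hxw
      rw [hBsig, Finset.mem_coe, Finset.mem_sigma]
      constructor
      · -- switched graph lies in Mk (k+1)
        rw [Mk, mem_filter, graphsWithDegreeSeq, mem_filter]
        refine ⟨⟨mem_univ _, fun p => ?_⟩, ?_⟩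
        · rw [switched_degree huw hvx hnuv hwx hux hwv hwx' huv' p]
          exact hGdeg p
        · have hnb := switched_nbhd_u huw hvx hnuv hwx hux hwv hwx' huv'
          have hfe : (S3f n D b).filter (fun q => (switched G u w v x).Adj u q)
              = insert v ((S3f n D b).filter (fun q => G.Adj u q)) := by
            ext q
            simp only [mem_filter, mem_insert]
            have hadj : (switched G u w v x).Adj u q ↔
                q ∈ insert v ((G.neighborFinset u).erase w) := by
              rw [← hnb, SimpleGraph.mem_neighborFinset]
            rw [hadj]
            simp only [mem_insert, mem_erase, SimpleGraph.mem_neighborFinset]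
            constructor
            · rintro ⟨hqS, (rfl | ⟨hqw, hq⟩)⟩
              · exact Or.inl rfl
              · exact Or.inr ⟨hqS, hq⟩
            · rintro (rfl | ⟨hqS, hq⟩)
              · refine ⟨?_, Or.inl rfl⟩
                rw [S3f, mem_filter]
                exact ⟨mem_univ _, hbv⟩
              · refine ⟨hqS, Or.inr ⟨?_, hq⟩⟩
                intro hqw
                subst hqw
                rw [S3f, mem_filter] at hqS
                exact hbw hqS.2
          rw [hfe, card_insert_of_notMem, hGk]
          rw [mem_filter]
          rintro ⟨-, hadj⟩
          exact hnuv hadj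
      · -- triple lies in Bt
        rw [Bt, Finset.mem_product]
        constructor
        · rw [mem_filter]
          refine ⟨?_, switched_adj_uv huw hvx hnuv hwx hux hwv hwx' huv'⟩
          rw [S3f, mem_filter]
          exact ⟨mem_univ _, hbv⟩
        · rw [mem_filter]
          exact ⟨mem_univ _, switched_adj_wx huw hvx hnuv hwx hux hwv hwx' huv'⟩
    · rintro ⟨G₁, t₁⟩ h₁ ⟨G₂, t₂⟩ h₂ heq
      injection heq with hgeq hteq
      have ht : t₁ = t₂ := hteq
      subst ht
      have : G₁ = G₂ := switched_inj hgeq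
      subst this
      rfl
  -- upper bound on Bsig
  have h3 : (Bsig.card : ℝ) ≤ 20 * (dbar * n) * ((Mk n D b u (k+1)).card : ℝ) := by
    rw [hBsig, Finset.card_sigma]
    push_cast
    calc (∑ G' ∈ Mk n D b u (k+1), ((Bt n D b u G').card : ℝ))
        ≤ ∑ _G' ∈ Mk n D b u (k+1), 20 * (dbar * n) := by
          refine Finset.sum_le_sum fun G' hG' => ?_
          exact Bt_card n D dbar b hsum u k hk G' hG'
      _ = 20 * (dbar * n) * ((Mk n D b u (k+1)).card : ℝ) := by
          rw [Finset.sum_const, nsmul_eq_mul]; ring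
  have h2' : (Fsig.card : ℝ) ≤ (Bsig.card : ℝ) := by exact_mod_cast h2
  linarith


lemma high_card (n : ℕ) (D : Fin n → ℕ) (dbar L : ℝ) (hdbar : 1 ≤ dbar) (hL : 0 < L)
    (hsum : (∑ i, (D i : ℝ)) ≤ dbar * n) :
    (((univ : Finset (Fin n)).filter fun y => L < (D y : ℝ)).card : ℝ) ≤ dbar * n / L := by
  set H := (univ : Finset (Fin n)).filter fun y => L < (D y : ℝ) with hH
  have h1 : (H.card : ℝ) * L ≤ ∑ y ∈ H, (D y : ℝ) := by
    have : ∑ _y ∈ H, L ≤ ∑ y ∈ H, (D y : ℝ) := by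
      refine Finset.sum_le_sum fun y hy => ?_
      rw [hH, mem_filter] at hy
      exact le_of_lt hy.2
    rwa [Finset.sum_const, nsmul_eq_mul] at this
  have h2 : ∑ y ∈ H, (D y : ℝ) ≤ ∑ y : Fin n, (D y : ℝ) := by
    refine Finset.sum_le_sum_of_subset_of_nonneg (subset_univ H) ?_
    intro i _ _
    exact Nat.cast_nonneg _
  rw [le_div_iff₀ hL]
  calc (H.card : ℝ) * L ≤ ∑ y ∈ H, (D y : ℝ) := h1
    _ ≤ ∑ y : Fin n, (D y : ℝ) := h2
    _ ≤ dbar * n := hsum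

lemma chain (n : ℕ) (D : Fin n → ℕ) (dbar a b L : ℝ)
    (ha : 40 ≤ a) (hb : 8 ≤ b) (hL0 : 0 ≤ L) (hLa : L ≤ a / 16)
    (hHigh : (((univ : Finset (Fin n)).filter fun y => L < (D y : ℝ)).card : ℝ) ≤ b / 2)
    (hS3 : 100 ≤ (S3f n D b).card)
    (hsum : (∑ i, (D i : ℝ)) ≤ dbar * n) (hdbar : 1 ≤ dbar)
    (u : Fin n) (hua : a ≤ (D u : ℝ)) (hub : (D u : ℝ) < b) :
    ((Mk n D b u 0).card : ℝ)
      ≤ (20 * (dbar * n) / (5 * a * b)) ^ (20 : ℕ)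
          * ((graphsWithDegreeSeq n D).card : ℝ) := by
  have hab : (0:ℝ) < 5 * a * b := by nlinarith
  have hr0 : (0:ℝ) ≤ 20 * (dbar * n) / (5 * a * b) := by
    have hn0 : (0:ℝ) ≤ (n:ℝ) := Nat.cast_nonneg n
    have : (0:ℝ) ≤ 20 * (dbar * n) := by nlinarith
    positivity
  set r : ℝ := 20 * (dbar * n) / (5 * a * b) with hr
  have key : ∀ j : ℕ, j ≤ 20 →
      ((Mk n D b u 0).card : ℝ) ≤ r ^ j * ((Mk n D b u j).card : ℝ) := by
    intro j
    induction j with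
    | zero => intro _; simp
    | succ i ih =>
      intro hi
      have hstep := step n D dbar a b L ha hb hL0 hLa hHigh hS3 hsum u hua hub i
        (by omega)
      have hile : ((Mk n D b u i).card : ℝ) ≤ r * ((Mk n D b u (i+1)).card : ℝ) := by
        rw [hr, div_mul_eq_mul_div, le_div_iff₀ hab]
        nlinarith [hstep]
      calc ((Mk n D b u 0).card : ℝ) ≤ r ^ i * ((Mk n D b u i).card : ℝ) := ih (by omega)
        _ ≤ r ^ i * (r * ((Mk n D b u (i+1)).card : ℝ)) := by
            refine mul_le_mul_of_nonneg_left hile (pow_nonneg hr0 i)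
        _ = r ^ (i+1) * ((Mk n D b u (i+1)).card : ℝ) := by ring
  have h20 := key 20 le_rfl
  have hsub : ((Mk n D b u 20).card : ℝ) ≤ ((graphsWithDegreeSeq n D).card : ℝ) := by
    exact_mod_cast card_le_card (filter_subset _ _)
  calc ((Mk n D b u 0).card : ℝ) ≤ r ^ (20:ℕ) * ((Mk n D b u 20).card : ℝ) := h20
    _ ≤ r ^ (20:ℕ) * ((graphsWithDegreeSeq n D).card : ℝ) :=
        mul_le_mul_of_nonneg_left hsub (pow_nonneg hr0 20)

end MidSwitch

open MidSwitch

/-- **Lemma (every vertex of `S₂ ∖ S₃` typically has a neighbour in `S₃`).**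
Here `S₂ = {u : d(u) ≥ n^{1/3}}` and `S₃ = {u : d(u) ≥ n^{4/5}}`, and `|S₃| ≥ 100`. -/
theorem midrange_vertices_attached_to_S3 :
    ∀ dbar : ℝ, 1 ≤ dbar →
    ∃ n₀ : ℕ, ∀ n : ℕ, n₀ ≤ n →
    ∀ D : Fin n → ℕ, (∀ w, 1 ≤ D w) →
    (graphsWithDegreeSeq n D).Nonempty →
    (∑ i, (D i : ℝ)) ≤ dbar * n →
    100 ≤ (Finset.univ.filter
        (fun u : Fin n => (n : ℝ) ^ ((4 : ℝ) / 5) ≤ (D u : ℝ))).card →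
    uniformProb n D (fun G => ∃ u : Fin n,
        (n : ℝ) ^ ((1 : ℝ) / 3) ≤ (D u : ℝ) ∧ (D u : ℝ) < (n : ℝ) ^ ((4 : ℝ) / 5) ∧
        ∀ v : Fin n, (n : ℝ) ^ ((4 : ℝ) / 5) ≤ (D v : ℝ) → ¬ G.Adj u v)
      ≤ 1 / n := by
  intro dbar hdbar
  set C : ℝ := 64 * dbar with hCdef
  have hC64 : 64 ≤ C := by rw [hCdef]; nlinarith
  have hC1 : (1:ℝ) ≤ C := by linarith
  have hC0 : (0:ℝ) ≤ C := by linarith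
  refine ⟨⌈C ^ (45:ℕ)⌉₊, ?_⟩
  intro n hn D hD1 hΩne hsum hS3card
  have hCn : C ^ (45:ℕ) ≤ (n:ℝ) := by
    have := Nat.ceil_le.mp hn
    exact_mod_cast this
  have hn1 : (1:ℝ) ≤ (n:ℝ) := le_trans (one_le_pow₀ hC1) hCn
  have hn0 : (0:ℝ) < (n:ℝ) := lt_of_lt_of_le one_pos hn1
  -- generic rpow bound
  have hpow : ∀ (e : ℝ) (m : ℕ), 0 ≤ e → (m:ℝ) = 45 * e → C ^ m ≤ (n:ℝ) ^ e := by
    intro e m he hm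
    have h1 : ((C ^ (45:ℕ) : ℝ)) ^ e ≤ (n:ℝ) ^ e :=
      Real.rpow_le_rpow (by positivity) hCn he
    have h2 : ((C ^ (45:ℕ) : ℝ)) ^ e = C ^ m := by
      rw [← Real.rpow_natCast C 45, ← Real.rpow_mul hC0, ← Real.rpow_natCast C m, hm]
      norm_num
    rwa [h2] at h1
  set a : ℝ := (n:ℝ) ^ ((1:ℝ)/3) with hadef
  set b : ℝ := (n:ℝ) ^ ((4:ℝ)/5) with hbdef
  set L : ℝ := 2 * dbar * (n:ℝ) ^ ((1:ℝ)/5) with hLdef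
  have hCa : C ^ (15:ℕ) ≤ a := hpow (1/3) 15 (by norm_num) (by norm_num)
  have hCb : C ^ (36:ℕ) ≤ b := hpow (4/5) 36 (by norm_num) (by norm_num)
  have hselfpow : ∀ m : ℕ, 1 ≤ m → C ≤ C ^ m := by
    intro m hm
    calc C = C ^ 1 := (pow_one C).symm
      _ ≤ C ^ m := pow_le_pow_right₀ hC1 hm
  have ha40 : 40 ≤ a := le_trans (by linarith [hselfpow 15 (by norm_num)]) hCa
  have hb8 : 8 ≤ b := le_trans (by linarith [hselfpow 36 (by norm_num)]) hCb
  have hn15pos : (0:ℝ) < (n:ℝ) ^ ((1:ℝ)/5) := Real.rpow_pos_of_pos hn0 _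
  have hL0 : (0:ℝ) ≤ L := by
    rw [hLdef]; positivity
  have hLpos : (0:ℝ) < L := by
    rw [hLdef]; positivity
  -- L ≤ a / 16
  have hLa : L ≤ a / 16 := by
    have h215 : C ^ (6:ℕ) ≤ (n:ℝ) ^ ((2:ℝ)/15) := hpow (2/15) 6 (by norm_num) (by norm_num)
    have h32 : 32 * dbar ≤ C ^ (6:ℕ) := by
      have : 32 * dbar ≤ C := by rw [hCdef]; nlinarith
      linarith [hselfpow 6 (by norm_num)]
    have hmul : (32 * dbar) * (n:ℝ) ^ ((1:ℝ)/5) ≤ (n:ℝ) ^ ((2:ℝ)/15) * (n:ℝ) ^ ((1:ℝ)/5) :=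
      mul_le_mul_of_nonneg_right (le_trans h32 h215) (le_of_lt hn15pos)
    have hadd : (n:ℝ) ^ ((2:ℝ)/15) * (n:ℝ) ^ ((1:ℝ)/5) = a := by
      rw [hadef, ← Real.rpow_add hn0]
      norm_num
    rw [hLdef]
    rw [hadd] at hmul
    linarith
  -- high-degree vertex count
  have hHigh : (((univ : Finset (Fin n)).filter fun y => L < (D y : ℝ)).card : ℝ) ≤ b / 2 := by
    refine le_trans (high_card n D dbar L hdbar hLpos hsum) ?_
    have h45 : b * (n:ℝ) ^ ((1:ℝ)/5) = (n:ℝ) := by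
      rw [hbdef, ← Real.rpow_add hn0]
      norm_num
    rw [div_le_div_iff₀ hLpos (by norm_num : (0:ℝ) < 2), hLdef]
    have hdbar0 : (0:ℝ) < dbar := by linarith
    nlinarith [h45]
  have hS3 : 100 ≤ (S3f n D b).card := by
    rw [S3f]
    exact hS3card
  -- the bad event is contained in the union of the Mk _ 0
  set A : SimpleGraph (Fin n) → Prop := fun G => ∃ u : Fin n,
      a ≤ (D u : ℝ) ∧ (D u : ℝ) < b ∧
      ∀ v : Fin n, b ≤ (D v : ℝ) → ¬ G.Adj u v with hAdef
  set U : Finset (Fin n) := univ.filter (fun u => a ≤ (D u : ℝ) ∧ (D u : ℝ) < b) with hUdef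
  set r : ℝ := 20 * (dbar * n) / (5 * a * b) with hrdef
  have habpos : (0:ℝ) < 5 * a * b := by nlinarith
  have hr0 : (0:ℝ) ≤ r := by
    rw [hrdef]
    have : (0:ℝ) ≤ 20 * (dbar * n) := by nlinarith
    positivity
  have hcount : ∀ (inst : DecidablePred A),
      (((@Finset.filter _ A inst (graphsWithDegreeSeq n D))).card : ℝ)
      ≤ (n:ℝ) * (r ^ (20:ℕ) * ((graphsWithDegreeSeq n D).card : ℝ)) := by
    intro inst
    have hEsub : @Finset.filter _ A inst (graphsWithDegreeSeq n D)
        ⊆ U.biUnion (fun u => Mk n D b u 0) := by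
      intro G hG
      rw [mem_filter] at hG
      obtain ⟨hGΩ, hA⟩ := hG
      rw [hAdef] at hA
      obtain ⟨u, hu1, hu2, hu3⟩ := hA
      rw [mem_biUnion]
      refine ⟨u, ?_, ?_⟩
      · rw [hUdef, mem_filter]
        exact ⟨mem_univ _, hu1, hu2⟩
      · rw [Mk, mem_filter]
        refine ⟨hGΩ, ?_⟩
        rw [card_eq_zero, filter_eq_empty_iff]
        intro v hv
        rw [S3f, mem_filter] at hv
        exact hu3 v hv.2
    have h1 : (@Finset.filter _ A inst (graphsWithDegreeSeq n D)).card
        ≤ ∑ u ∈ U, (Mk n D b u 0).card :=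
      le_trans (card_le_card hEsub) (card_biUnion_le)
    have h2 : ∀ u ∈ U, ((Mk n D b u 0).card : ℝ)
        ≤ r ^ (20:ℕ) * ((graphsWithDegreeSeq n D).card : ℝ) := by
      intro u hu
      rw [hUdef, mem_filter] at hu
      exact chain n D dbar a b L ha40 hb8 hL0 hLa hHigh hS3 hsum hdbar u hu.2.1 hu.2.2
    have h3 : (∑ u ∈ U, ((Mk n D b u 0).card : ℝ))
        ≤ (U.card : ℝ) * (r ^ (20:ℕ) * ((graphsWithDegreeSeq n D).card : ℝ)) := by
      refine le_trans (Finset.sum_le_sum h2) ?_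
      rw [Finset.sum_const, nsmul_eq_mul]
    have h4 : (U.card : ℝ) ≤ (n:ℝ) := by
      have := card_le_card (subset_univ U)
      rw [card_univ, Fintype.card_fin] at this
      exact_mod_cast this
    have h5 : ((@Finset.filter _ A inst (graphsWithDegreeSeq n D)).card : ℝ)
        ≤ ∑ u ∈ U, ((Mk n D b u 0).card : ℝ) := by
      push_cast
      exact_mod_cast h1
    have h6 : (0:ℝ) ≤ r ^ (20:ℕ) * ((graphsWithDegreeSeq n D).card : ℝ) := by
      positivity
    nlinarith [h3, h4, h5, h6]
  -- numeric bound : n * r^20 ≤ 1/n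
  have hnum : (n:ℝ) * r ^ (20:ℕ) ≤ 1 / n := by
    have hab : a * b = (n:ℝ) ^ ((17:ℝ)/15) := by
      rw [hadef, hbdef, ← Real.rpow_add hn0]
      norm_num
    have h17pos : (0:ℝ) < (n:ℝ) ^ ((17:ℝ)/15) := Real.rpow_pos_of_pos hn0 _
    have hn215 : (n:ℝ) ^ (-(2:ℝ)/15) = (n:ℝ) / (n:ℝ) ^ ((17:ℝ)/15) := by
      rw [show -(2:ℝ)/15 = 1 - (17:ℝ)/15 by norm_num, Real.rpow_sub hn0, Real.rpow_one]
    have hrval : r = 4 * dbar * (n:ℝ) ^ (-(2:ℝ)/15) := by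
      rw [hrdef, mul_assoc, hab, hn215]
      field_simp
      ring
    have h20 : r ^ (20:ℕ) = (4*dbar) ^ (20:ℕ) * (n:ℝ) ^ (-(8:ℝ)/3) := by
      rw [hrval, mul_pow]
      congr 1
      rw [← Real.rpow_natCast ((n:ℝ) ^ (-(2:ℝ)/15)) 20, ← Real.rpow_mul (le_of_lt hn0)]
      norm_num
    have hbound : ((4*dbar):ℝ) ^ (20:ℕ) ≤ (n:ℝ) ^ ((2:ℝ)/3) := by
      have hC30 : C ^ (30:ℕ) ≤ (n:ℝ) ^ ((2:ℝ)/3) := hpow (2/3) 30 (by norm_num) (by norm_num)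
      have h1 : ((4*dbar):ℝ) ^ (20:ℕ) ≤ C ^ (20:ℕ) := by
        refine pow_le_pow_left₀ (by linarith) ?_ 20
        rw [hCdef]; linarith
      have h2 : C ^ (20:ℕ) ≤ C ^ (30:ℕ) := pow_le_pow_right₀ hC1 (by norm_num)
      linarith
    calc (n:ℝ) * r ^ (20:ℕ)
        = (4*dbar) ^ (20:ℕ) * ((n:ℝ) ^ ((1:ℝ)) * (n:ℝ) ^ (-(8:ℝ)/3)) := by
          rw [h20, Real.rpow_one]; ring
      _ ≤ (n:ℝ) ^ ((2:ℝ)/3) * ((n:ℝ) ^ ((1:ℝ)) * (n:ℝ) ^ (-(8:ℝ)/3)) := by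
          refine mul_le_mul_of_nonneg_right hbound ?_
          positivity
      _ = (n:ℝ) ^ ((2:ℝ)/3 + (1 + -(8:ℝ)/3)) := by
          rw [Real.rpow_add hn0, Real.rpow_add hn0]
      _ = 1 / n := by
          norm_num
          rw [show (-1:ℝ) = -(1:ℝ) by norm_num, Real.rpow_neg (le_of_lt hn0),
            Real.rpow_one]
  -- final assembly
  have hΩpos : (0:ℝ) < ((graphsWithDegreeSeq n D).card : ℝ) := by
    exact_mod_cast card_pos.mpr hΩne
  rw [uniformProb, div_le_iff₀ hΩpos]
  refine le_trans (hcount _) ?_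
  calc (n:ℝ) * (r ^ (20:ℕ) * ((graphsWithDegreeSeq n D).card : ℝ))
      = ((n:ℝ) * r ^ (20:ℕ)) * ((graphsWithDegreeSeq n D).card : ℝ) := by ring
    _ ≤ (1 / n) * ((graphsWithDegreeSeq n D).card : ℝ) :=
        mul_le_mul_of_nonneg_right hnum (le_of_lt hΩpos)
end
end

section
/- For every d̄ ≥ 1 and every ε > 0 with 1000ε ≤ 1/d̄ there exists n₀ ∈ ℕ such that the following holds for every n ≥ n₀. Let D be a feasible degree sequence on V = [n] with Σ^D ≤ d̄n, set T := {u ∈ V : d(u) ≤ 3d̄}, S₂ := {u ∈ V : d(u) ≥ n^{1/3}} and S₃ := {u ∈ V : d(u) ≥ n^{4/5}}, and assume Σ_{u∈S₃} d(u) ≥ εn/10. Then P[ |N_{G^D}(S₂) ∩ T| ≤ ε²n ] ≤ 1/n. -/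
open Finset

noncomputable section
open scoped Classical

set_option linter.unusedSectionVars false
set_option linter.unusedVariables false
set_option linter.unusedTactic false
set_option linter.unreachableTactic false

section Switch
variable {α : Type*}

def pr (a b u t : α) : Prop := (a = u ∧ b = t) ∨ (a = t ∧ b = u)

lemma pr_symm {a b u t : α} (h : pr a b u t) : pr b a u t := by
  unfold pr at *; tauto

def switchG (G : SimpleGraph α) (v w x y : α) : SimpleGraph α where
  Adj a b := a ≠ b ∧ ((G.Adj a b ∧ ¬ pr a b v w ∧ ¬ pr a b x y) ∨ pr a b v x ∨ pr a b w y)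
  symm := by
    constructor
    intro a b h
    refine ⟨Ne.symm h.1, ?_⟩
    rcases h.2 with ⟨h1, h2, h3⟩ | h | h
    · exact Or.inl ⟨h1.symm, fun hc => h2 (pr_symm hc), fun hc => h3 (pr_symm hc)⟩
    · exact Or.inr (Or.inl (pr_symm h))
    · exact Or.inr (Or.inr (pr_symm h))
  loopless := ⟨fun a h => h.1 rfl⟩

lemma switch_adj {G : SimpleGraph α} {v w x y a b : α} :
    (switchG G v w x y).Adj a b ↔
      a ≠ b ∧ ((G.Adj a b ∧ ¬ pr a b v w ∧ ¬ pr a b x y) ∨ pr a b v x ∨ pr a b w y) :=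
  Iff.rfl

/-- validity data for a switching -/
structure SwValid (G : SimpleGraph α) (v w x y : α) : Prop where
  adj_vw : G.Adj v w
  adj_xy : G.Adj x y
  nadj_vx : ¬ G.Adj v x
  nadj_wy : ¬ G.Adj w y
  ne_vx : v ≠ x
  ne_vy : v ≠ y
  ne_wx : w ≠ x
  ne_wy : w ≠ y

namespace SwValid
variable {G : SimpleGraph α} {v w x y : α} (h : SwValid G v w x y)

include h
lemma ne_vw : v ≠ w := h.adj_vw.ne
lemma ne_xy : x ≠ y := h.adj_xy.ne

end SwValid

variable [Fintype α] [DecidableEq α]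

lemma card_insert_erase {s : Finset α} {w x : α} (hw : w ∈ s) (hx : x ∉ s) :
    (insert x (s.erase w)).card = s.card := by
  have hxe : x ∉ s.erase w := fun hx' => hx (Finset.mem_of_mem_erase hx')
  rw [Finset.card_insert_of_notMem hxe, Finset.card_erase_of_mem hw]
  have : 0 < s.card := Finset.card_pos.mpr ⟨w, hw⟩
  omega

lemma switch_nbr_v {G : SimpleGraph α} {v w x y : α} (h : SwValid G v w x y) :
    (switchG G v w x y).neighborFinset v = insert x ((G.neighborFinset v).erase w) := by
  have hvw := h.ne_vw; have hvx := h.ne_vx; have hvy := h.ne_vy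
  ext b
  simp only [SimpleGraph.mem_neighborFinset, switch_adj, Finset.mem_insert, Finset.mem_erase,
    SimpleGraph.mem_neighborFinset, pr]
  have hnb : G.Adj v b → v ≠ b := fun hc => G.ne_of_adj hc
  aesop

lemma switch_nbr_w {G : SimpleGraph α} {v w x y : α} (h : SwValid G v w x y) :
    (switchG G v w x y).neighborFinset w = insert y ((G.neighborFinset w).erase v) := by
  have hvw := h.ne_vw; have hwx := h.ne_wx; have hwy := h.ne_wy
  ext b
  simp only [SimpleGraph.mem_neighborFinset, switch_adj, Finset.mem_insert, Finset.mem_erase,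
    SimpleGraph.mem_neighborFinset, pr]
  have hnb : G.Adj w b → w ≠ b := fun hc => G.ne_of_adj hc
  have hsym : G.Adj w v := h.adj_vw.symm
  aesop

lemma switch_nbr_x {G : SimpleGraph α} {v w x y : α} (h : SwValid G v w x y) :
    (switchG G v w x y).neighborFinset x = insert v ((G.neighborFinset x).erase y) := by
  have hvx := h.ne_vx; have hwx := h.ne_wx; have hxy := h.ne_xy
  ext b
  simp only [SimpleGraph.mem_neighborFinset, switch_adj, Finset.mem_insert, Finset.mem_erase,
    SimpleGraph.mem_neighborFinset, pr]
  have hnb : G.Adj x b → x ≠ b := fun hc => G.ne_of_adj hc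
  aesop

lemma switch_nbr_y {G : SimpleGraph α} {v w x y : α} (h : SwValid G v w x y) :
    (switchG G v w x y).neighborFinset y = insert w ((G.neighborFinset y).erase x) := by
  have hvy := h.ne_vy; have hwy := h.ne_wy; have hxy := h.ne_xy
  ext b
  simp only [SimpleGraph.mem_neighborFinset, switch_adj, Finset.mem_insert, Finset.mem_erase,
    SimpleGraph.mem_neighborFinset, pr]
  have hnb : G.Adj y b → y ≠ b := fun hc => G.ne_of_adj hc
  have hsym : G.Adj y x := h.adj_xy.symm
  aesop

lemma switch_nbr_other {G : SimpleGraph α} {v w x y a : α}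
    (hv : a ≠ v) (hw : a ≠ w) (hx : a ≠ x) (hy : a ≠ y) :
    (switchG G v w x y).neighborFinset a = G.neighborFinset a := by
  ext b
  simp only [SimpleGraph.mem_neighborFinset, switch_adj, pr]
  have hnb : G.Adj a b → a ≠ b := fun hc => G.ne_of_adj hc
  aesop

lemma degree_switch {G : SimpleGraph α} {v w x y : α} (h : SwValid G v w x y) (a : α) :
    (switchG G v w x y).degree a = G.degree a := by
  by_cases hv : a = v
  · subst hv
    rw [SimpleGraph.degree, SimpleGraph.degree, switch_nbr_v h,
      card_insert_erase (by simpa using h.adj_vw) (by simpa using h.nadj_vx)]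
  · by_cases hw : a = w
    · subst hw
      rw [SimpleGraph.degree, SimpleGraph.degree, switch_nbr_w h,
        card_insert_erase (by simpa using h.adj_vw.symm) (by simpa using h.nadj_wy)]
    · by_cases hx : a = x
      · subst hx
        rw [SimpleGraph.degree, SimpleGraph.degree, switch_nbr_x h,
          card_insert_erase (by simpa using h.adj_xy)
            (by simpa using fun hc => h.nadj_vx (SimpleGraph.Adj.symm hc))]
      · by_cases hy : a = y
        · subst hy
          rw [SimpleGraph.degree, SimpleGraph.degree, switch_nbr_y h,
            card_insert_erase (by simpa using h.adj_xy.symm)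
              (by simpa using fun hc => h.nadj_wy (SimpleGraph.Adj.symm hc))]
        · rw [SimpleGraph.degree, SimpleGraph.degree, switch_nbr_other hv hw hx hy]

lemma switch_inj {G₁ G₂ : SimpleGraph α} {v w x y : α}
    (h₁ : SwValid G₁ v w x y) (h₂ : SwValid G₂ v w x y)
    (he : switchG G₁ v w x y = switchG G₂ v w x y) : G₁ = G₂ := by
  ext a b
  have hadj : ∀ a b, (switchG G₁ v w x y).Adj a b ↔ (switchG G₂ v w x y).Adj a b := by
    rw [he]; intro _ _; rfl
  have H := hadj a b
  rw [switch_adj, switch_adj] at H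
  by_cases h1 : pr a b v w
  · constructor <;> intro _
    · rcases h1 with ⟨ha, hb⟩ | ⟨ha, hb⟩ <;> subst ha <;> subst hb
      · exact h₂.adj_vw
      · exact h₂.adj_vw.symm
    · rcases h1 with ⟨ha, hb⟩ | ⟨ha, hb⟩ <;> subst ha <;> subst hb
      · exact h₁.adj_vw
      · exact h₁.adj_vw.symm
  · by_cases h2 : pr a b x y
    · constructor <;> intro _
      · rcases h2 with ⟨ha, hb⟩ | ⟨ha, hb⟩ <;> subst ha <;> subst hb
        · exact h₂.adj_xy
        · exact h₂.adj_xy.symm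
      · rcases h2 with ⟨ha, hb⟩ | ⟨ha, hb⟩ <;> subst ha <;> subst hb
        · exact h₁.adj_xy
        · exact h₁.adj_xy.symm
    · by_cases h3 : pr a b v x
      · constructor <;> intro hadj'
        · rcases h3 with ⟨ha, hb⟩ | ⟨ha, hb⟩ <;> subst ha <;> subst hb
          · exact absurd hadj' h₁.nadj_vx
          · exact absurd hadj'.symm h₁.nadj_vx
        · rcases h3 with ⟨ha, hb⟩ | ⟨ha, hb⟩ <;> subst ha <;> subst hb
          · exact absurd hadj' h₂.nadj_vx
          · exact absurd hadj'.symm h₂.nadj_vx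
      · by_cases h4 : pr a b w y
        · constructor <;> intro hadj'
          · rcases h4 with ⟨ha, hb⟩ | ⟨ha, hb⟩ <;> subst ha <;> subst hb
            · exact absurd hadj' h₁.nadj_wy
            · exact absurd hadj'.symm h₁.nadj_wy
          · rcases h4 with ⟨ha, hb⟩ | ⟨ha, hb⟩ <;> subst ha <;> subst hb
            · exact absurd hadj' h₂.nadj_wy
            · exact absurd hadj'.symm h₂.nadj_wy
        · constructor <;> intro hadj'
          · have : (switchG G₁ v w x y).Adj a b := by
              rw [switch_adj]; exact ⟨G₁.ne_of_adj hadj', Or.inl ⟨hadj', h1, h2⟩⟩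
            rcases (H.mp this).2 with ⟨ha, _, _⟩ | hp | hp
            · exact ha
            · exact absurd hp h3
            · exact absurd hp h4
          · have : (switchG G₂ v w x y).Adj a b := by
              rw [switch_adj]; exact ⟨G₂.ne_of_adj hadj', Or.inl ⟨hadj', h1, h2⟩⟩
            rcases (H.mpr this).2 with ⟨ha, _, _⟩ | hp | hp
            · exact ha
            · exact absurd hp h3
            · exact absurd hp h4

end Switch

section Main
variable (n : ℕ) (D : Fin n → ℕ) (dbar : ℝ)

/-- the random set of the statement -/
def Wg (G : SimpleGraph (Fin n)) : Finset (Fin n) :=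
  Finset.univ.filter (fun w : Fin n =>
    (D w : ℝ) ≤ 3 * dbar ∧
    ¬ (n : ℝ) ^ ((1 : ℝ) / 3) ≤ (D w : ℝ) ∧
    ∃ v : Fin n, (n : ℝ) ^ ((1 : ℝ) / 3) ≤ (D v : ℝ) ∧ G.Adj v w)

/-- x is a low-degree vertex with no high-degree neighbour -/
def Xp (G : SimpleGraph (Fin n)) (x : Fin n) : Prop :=
  (D x : ℝ) ≤ 3 * dbar ∧ ∀ u, (n : ℝ) ^ ((1 : ℝ) / 3) ≤ (D u : ℝ) → ¬ G.Adj u x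

def Qvalid (G : SimpleGraph (Fin n)) (q : Fin n × Fin n × Fin n × Fin n) : Prop :=
  (n : ℝ) ^ ((4 : ℝ) / 5) ≤ (D q.1 : ℝ) ∧ G.Adj q.1 q.2.1 ∧
    ¬ (D q.2.1 : ℝ) ≤ 3 * dbar ∧ Xp n D dbar G q.2.2.1 ∧ G.Adj q.2.2.1 q.2.2.2 ∧
    ¬ G.Adj q.2.1 q.2.2.2 ∧ q.2.2.2 ≠ q.2.1

def Qset (G : SimpleGraph (Fin n)) : Finset (Fin n × Fin n × Fin n × Fin n) :=
  Finset.univ.filter (Qvalid n D dbar G)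

def Rvalid (G' : SimpleGraph (Fin n)) (q : Fin n × Fin n × Fin n × Fin n) : Prop :=
  q.2.2.1 ∈ Wg n D dbar G' ∧ (n : ℝ) ^ ((1 : ℝ) / 3) ≤ (D q.1 : ℝ) ∧ G'.Adj q.1 q.2.2.1 ∧
    (∀ u, (n : ℝ) ^ ((1 : ℝ) / 3) ≤ (D u : ℝ) → G'.Adj u q.2.2.1 → u = q.1) ∧
    G'.Adj q.2.1 q.2.2.2

def Rset (G' : SimpleGraph (Fin n)) : Finset (Fin n × Fin n × Fin n × Fin n) :=
  Finset.univ.filter (Rvalid n D dbar G')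

def Cle (j : ℕ) : Finset (SimpleGraph (Fin n)) :=
  (graphsWithDegreeSeq n D).filter (fun G => (Wg n D dbar G).card ≤ j)

variable {n D dbar}

lemma mem_gwds {G : SimpleGraph (Fin n)} :
    G ∈ graphsWithDegreeSeq n D ↔ ∀ v, G.degree v = D v := by
  simp [graphsWithDegreeSeq]

section Facts
variable {G : SimpleGraph (Fin n)} {q : Fin n × Fin n × Fin n × Fin n}
  (hA : 3 * dbar < (n : ℝ) ^ ((1 : ℝ) / 3))
  (hAB : (n : ℝ) ^ ((1 : ℝ) / 3) ≤ (n : ℝ) ^ ((4 : ℝ) / 5))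

include hA hAB

lemma qvalid_s2v (hq : Qvalid n D dbar G q) : (n : ℝ) ^ ((1 : ℝ) / 3) ≤ (D q.1 : ℝ) :=
  le_trans hAB hq.1

lemma qvalid_swvalid (hq : Qvalid n D dbar G q) :
    SwValid G q.1 q.2.1 q.2.2.1 q.2.2.2 := by
  obtain ⟨h1, h2, h3, h4, h5, h6, h7⟩ := hq
  refine ⟨h2, h5, fun hc => h4.2 q.1 (le_trans hAB h1) hc, h6, ?_, ?_, ?_, fun hc => h7 hc.symm⟩
  · intro hc
    rw [hc] at h1
    exact absurd (le_trans hAB h1) (not_le.mpr (lt_of_le_of_lt h4.1 hA))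
  · intro hc
    have h5' := h5.symm
    rw [← hc] at h5'
    exact h4.2 q.1 (le_trans hAB h1) h5'
  · intro hc
    rw [hc] at h3
    exact h3 h4.1

/-- abbreviation for the switched graph -/
def swq (G : SimpleGraph (Fin n)) (q : Fin n × Fin n × Fin n × Fin n) : SimpleGraph (Fin n) :=
  switchG G q.1 q.2.1 q.2.2.1 q.2.2.2

lemma swq_mem (hG : G ∈ graphsWithDegreeSeq n D) (hq : Qvalid n D dbar G q) :
    swq G q ∈ graphsWithDegreeSeq n D := by
  rw [mem_gwds] at *
  intro a
  rw [swq, degree_switch (qvalid_swvalid hA hAB hq)]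
  exact hG a

lemma wg_swq_subset (hq : Qvalid n D dbar G q) :
    Wg n D dbar (swq G q) ⊆ insert q.2.2.1 (insert q.2.2.2 (Wg n D dbar G)) := by
  intro u hu
  rw [Wg, Finset.mem_filter] at hu
  obtain ⟨-, hT, hnS2, v', hv', hadj⟩ := hu
  by_cases hx : u = q.2.2.1
  · simp [hx]
  by_cases hy : u = q.2.2.2
  · simp [hy]
  have hnv : u ≠ q.1 := by
    rintro rfl
    exact hnS2 (le_trans hAB hq.1)
  have hnw : u ≠ q.2.1 := by
    rintro rfl
    exact hq.2.2.1 hT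
  rw [Finset.mem_insert, Finset.mem_insert]
  right; right
  rw [Wg, Finset.mem_filter]
  refine ⟨Finset.mem_univ _, hT, hnS2, v', hv', ?_⟩
  rcases (switch_adj.mp hadj).2 with ⟨ha, -, -⟩ | hp | hp
  · exact ha
  · rcases hp with ⟨_, hb⟩ | ⟨_, hb⟩
    · exact absurd hb hx
    · exact absurd hb hnv
  · rcases hp with ⟨_, hb⟩ | ⟨_, hb⟩
    · exact absurd hb hy
    · exact absurd hb hnw

lemma card_wg_swq (hq : Qvalid n D dbar G q) :
    (Wg n D dbar (swq G q)).card ≤ (Wg n D dbar G).card + 2 := by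
  calc (Wg n D dbar (swq G q)).card
      ≤ (insert q.2.2.1 (insert q.2.2.2 (Wg n D dbar G))).card :=
        Finset.card_le_card (wg_swq_subset hA hAB hq)
    _ ≤ (insert q.2.2.2 (Wg n D dbar G)).card + 1 := Finset.card_insert_le _ _
    _ ≤ (Wg n D dbar G).card + 1 + 1 := by
        have := Finset.card_insert_le q.2.2.2 (Wg n D dbar G); omega
    _ = (Wg n D dbar G).card + 2 := by omega

lemma swq_rvalid (hq : Qvalid n D dbar G q) : Rvalid n D dbar (swq G q) q := by
  obtain ⟨h1, h2, h3, h4, h5, h6, h7⟩ := hq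
  have hsw := qvalid_swvalid hA hAB ⟨h1, h2, h3, h4, h5, h6, h7⟩
  have hadjvx : (swq G q).Adj q.1 q.2.2.1 := by
    rw [swq, switch_adj]
    exact ⟨hsw.ne_vx, Or.inr (Or.inl (Or.inl ⟨rfl, rfl⟩))⟩
  refine ⟨?_, le_trans hAB h1, hadjvx, ?_, ?_⟩
  · rw [Wg, Finset.mem_filter]
    exact ⟨Finset.mem_univ _, h4.1, fun hc => absurd (lt_of_le_of_lt h4.1 hA) (not_lt.mpr hc),
      q.1, le_trans hAB h1, hadjvx⟩
  · intro u hu hadj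
    rcases (switch_adj.mp hadj).2 with ⟨ha, -, -⟩ | hp | hp
    · exact absurd ha (h4.2 u hu)
    · rcases hp with ⟨ha, _⟩ | ⟨_, hb⟩
      · exact ha
      · exact absurd hb.symm hsw.ne_vx
    · rcases hp with ⟨_, hb⟩ | ⟨_, hb⟩
      · exact absurd hb hsw.ne_xy
      · exact absurd hb.symm hsw.ne_wx
  · rw [swq, switch_adj]
    exact ⟨hsw.ne_wy, Or.inr (Or.inr (Or.inl ⟨rfl, rfl⟩))⟩

end Facts

section Count
variable (hA : 3 * dbar < (n : ℝ) ^ ((1 : ℝ) / 3))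
  (hAB : (n : ℝ) ^ ((1 : ℝ) / 3) ≤ (n : ℝ) ^ ((4 : ℝ) / 5))

lemma card_Rset_le {G' : SimpleGraph (Fin n)} (hG' : G' ∈ graphsWithDegreeSeq n D) :
    (Rset n D dbar G').card ≤ (Wg n D dbar G').card * ∑ i, D i := by
  classical
  have hcard : ((Wg n D dbar G') ×ˢ (Finset.univ.sigma (fun a => G'.neighborFinset a))).card
      = (Wg n D dbar G').card * ∑ i, D i := by
    rw [Finset.card_product, Finset.card_sigma]
    congr 1
    refine Finset.sum_congr rfl (fun a _ => ?_)
    rw [SimpleGraph.card_neighborFinset_eq_degree]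
    exact (mem_gwds.mp hG') a
  rw [← hcard]
  apply Finset.card_le_card_of_injOn
    (fun q => (q.2.2.1, ⟨q.2.1, q.2.2.2⟩))
  · intro q hq
    rw [Rset, Finset.mem_coe, Finset.mem_filter] at hq
    obtain ⟨-, hW, hS2v, hadjvx, huniq, hadjwy⟩ := hq
    rw [Finset.mem_coe, Finset.mem_product, Finset.mem_sigma]
    exact ⟨hW, Finset.mem_univ _, SimpleGraph.mem_neighborFinset _ _ _ |>.mpr hadjwy⟩
  · intro q1 hq1 q2 hq2 he
    simp only [Finset.coe_filter, Set.mem_setOf_eq, Rset] at hq1 hq2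
    obtain ⟨-, hq1⟩ := hq1
    obtain ⟨-, hq2⟩ := hq2
    simp only [Prod.mk.injEq, Sigma.mk.inj_iff, heq_eq_eq] at he
    obtain ⟨hx, hw, hy⟩ := he
    have hv : q2.1 = q1.1 := by
      apply hq1.2.2.2.1 q2.1 hq2.2.1
      rw [hx]
      exact hq2.2.2.1
    have : q1 = (q1.1, q1.2.1, q1.2.2.1, q1.2.2.2) := rfl
    rw [this]
    have : q2 = (q2.1, q2.2.1, q2.2.2.1, q2.2.2.2) := rfl
    rw [this, hv, hw, hx, hy]

include hA hAB in
lemma step_count (j : ℕ) :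
    ∑ G ∈ Cle n D dbar j, (Qset n D dbar G).card
      ≤ ∑ G' ∈ Cle n D dbar (j + 2), (Rset n D dbar G').card := by
  classical
  rw [← Finset.card_sigma, ← Finset.card_sigma]
  apply Finset.card_le_card_of_injOn (fun p => ⟨swq p.1 p.2, p.2⟩)
  · intro p hp
    rw [Finset.mem_coe, Finset.mem_sigma] at hp ⊢
    obtain ⟨hG, hq⟩ := hp
    rw [Cle, Finset.mem_filter] at hG
    rw [Qset, Finset.mem_filter] at hq
    refine ⟨?_, ?_⟩
    · rw [Cle, Finset.mem_filter]
      refine ⟨swq_mem hA hAB hG.1 hq.2, ?_⟩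
      calc (Wg n D dbar (swq p.1 p.2)).card ≤ (Wg n D dbar p.1).card + 2 :=
            card_wg_swq hA hAB hq.2
        _ ≤ j + 2 := by omega
    · rw [Rset, Finset.mem_filter]
      exact ⟨Finset.mem_univ _, swq_rvalid hA hAB hq.2⟩
  · intro p1 hp1 p2 hp2 he
    simp only [Finset.mem_coe, Finset.mem_sigma, Cle, Qset, Finset.mem_filter] at hp1 hp2
    simp only [Sigma.mk.inj_iff, heq_eq_eq] at he
    obtain ⟨hG, hq⟩ := he
    have hGeq : p1.1 = p2.1 := by
      apply switch_inj (qvalid_swvalid hA hAB hp1.2.2) (qvalid_swvalid hA hAB (hq ▸ hp2.2.2))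
      rw [swq] at hG
      rw [hG, hq, swq]
    exact Sigma.ext hGeq (heq_of_eq_of_heq (by rw [hq]) HEq.rfl)

end Count

section Analytic
variable (ε : ℝ)
variable (hA : 3 * dbar < (n : ℝ) ^ ((1 : ℝ) / 3))
  (hAB : (n : ℝ) ^ ((1 : ℝ) / 3) ≤ (n : ℝ) ^ ((4 : ℝ) / 5))
  (hdbar : 1 ≤ dbar) (hnpos : 0 < n)

include hA hAB hdbar hnpos in
set_option maxHeartbeats 1000000 in
lemma qset_lower {G : SimpleGraph (Fin n)} (hG : G ∈ graphsWithDegreeSeq n D) {j : ℕ}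
    (hcnt : (Wg n D dbar G).card ≤ j)
    (hD1 : ∀ w, 1 ≤ D w) (hsumD : (∑ i, (D i : ℝ)) ≤ dbar * n)
    (hS3 : ε * n / 10 ≤ ∑ u ∈ Finset.univ.filter
        (fun u : Fin n => (n : ℝ) ^ ((4 : ℝ) / 5) ≤ (D u : ℝ)), (D u : ℝ))
    (hj1 : 0 ≤ ε * n / 10 - 3 * dbar * j) (hj2 : (j : ℝ) ≤ 2 * n / 3) :
    (ε * n / 10 - 3 * dbar * j) * (2 * n / 3 - (j : ℝ)) - 2 * dbar ^ 2 * (n : ℝ) ^ ((23 : ℝ) / 15)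
      ≤ ((Qset n D dbar G).card : ℝ) := by
  classical
  have hdeg : ∀ a, ((G.neighborFinset a).card : ℕ) = D a := by
    intro a
    rw [SimpleGraph.card_neighborFinset_eq_degree]
    exact (mem_gwds.mp hG) a
  have hnR : (0 : ℝ) < n := by exact_mod_cast hnpos
  have hdpos : (0 : ℝ) < dbar := lt_of_lt_of_le zero_lt_one hdbar
  set S3s := Finset.univ.filter (fun v : Fin n => (n : ℝ) ^ ((4 : ℝ) / 5) ≤ (D v : ℝ)) with hS3s
  set P0 := S3s.sigma (fun v => G.neighborFinset v) with hP0def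
  have hP0 : (P0.card : ℝ) = ∑ v ∈ S3s, (D v : ℝ) := by
    rw [hP0def, Finset.card_sigma]
    push_cast
    exact Finset.sum_congr rfl (fun v _ => by rw [hdeg v])
  set P1 := P0.filter (fun p => ¬ (D p.2 : ℝ) ≤ 3 * dbar) with hP1def
  set Pb := P0.filter (fun p => (D p.2 : ℝ) ≤ 3 * dbar) with hPbdef
  have hsplit : Pb.card + P1.card = P0.card :=
    Finset.card_filter_add_card_filter_not _
  -- bound on Pb
  have hPb : (Pb.card : ℝ) ≤ 3 * dbar * ((Wg n D dbar G).card : ℝ) := by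
    have hinj : Pb.card ≤ ((Wg n D dbar G).sigma (fun w => G.neighborFinset w)).card := by
      apply Finset.card_le_card_of_injOn (fun p => ⟨p.2, p.1⟩)
      · intro p hp
        rw [hPbdef, Finset.mem_coe, Finset.mem_filter, hP0def, Finset.mem_sigma] at hp
        obtain ⟨⟨hv, hw⟩, hT⟩ := hp
        rw [Finset.mem_coe, Finset.mem_sigma]
        constructor
        · rw [Wg, Finset.mem_filter]
          rw [hS3s, Finset.mem_filter] at hv
          refine ⟨Finset.mem_univ _, hT, fun hc => absurd (lt_of_le_of_lt hT hA)
            (not_lt.mpr hc), p.1, le_trans hAB hv.2, ?_⟩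
          exact (SimpleGraph.mem_neighborFinset _ _ _).mp hw
        · exact (SimpleGraph.mem_neighborFinset _ _ _).mpr
            ((SimpleGraph.mem_neighborFinset _ _ _).mp hw).symm
      · intro p1 _ p2 _ he
        simp only [Sigma.mk.inj_iff, heq_eq_eq] at he
        exact Sigma.ext he.2 (heq_of_eq he.1)
    have hsig : (((Wg n D dbar G).sigma (fun w => G.neighborFinset w)).card : ℝ)
        ≤ 3 * dbar * ((Wg n D dbar G).card : ℝ) := by
      rw [Finset.card_sigma]
      push_cast
      calc ∑ w ∈ Wg n D dbar G, ((G.neighborFinset w).card : ℝ)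
          ≤ ∑ w ∈ Wg n D dbar G, 3 * dbar := by
            apply Finset.sum_le_sum
            intro w hw
            rw [Wg, Finset.mem_filter] at hw
            rw [hdeg w]
            exact hw.2.1
        _ = 3 * dbar * ((Wg n D dbar G).card : ℝ) := by
            rw [Finset.sum_const, nsmul_eq_mul]; try ring
    calc (Pb.card : ℝ) ≤ _ := by exact_mod_cast hinj
      _ ≤ _ := hsig
  have hP1 : ε * n / 10 - 3 * dbar * j ≤ (P1.card : ℝ) := by
    have h1 : ε * n / 10 ≤ (P0.card : ℝ) := by rw [hP0]; exact hS3
    have h2 : (Pb.card : ℝ) ≤ 3 * dbar * j := by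
      calc (Pb.card : ℝ) ≤ 3 * dbar * ((Wg n D dbar G).card : ℝ) := hPb
        _ ≤ 3 * dbar * j := by
            apply mul_le_mul_of_nonneg_left _ (by positivity)
            exact_mod_cast hcnt
    have h3 : (Pb.card : ℝ) + (P1.card : ℝ) = (P0.card : ℝ) := by exact_mod_cast hsplit
    linarith
  -- sets T and X
  set Ts := Finset.univ.filter (fun w : Fin n => (D w : ℝ) ≤ 3 * dbar) with hTsdef
  set nT := Finset.univ.filter (fun w : Fin n => ¬ (D w : ℝ) ≤ 3 * dbar) with hnTdef
  have hTsplit : Ts.card + nT.card = n := by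
    rw [hTsdef, hnTdef, Finset.card_filter_add_card_filter_not, Finset.card_univ,
      Fintype.card_fin]
  have hnT : (nT.card : ℝ) ≤ n / 3 := by
    have h1 : 3 * dbar * (nT.card : ℝ) ≤ dbar * n := by
      calc 3 * dbar * (nT.card : ℝ) = ∑ _w ∈ nT, 3 * dbar := by
            rw [Finset.sum_const, nsmul_eq_mul]; try ring
        _ ≤ ∑ w ∈ nT, (D w : ℝ) := by
            apply Finset.sum_le_sum
            intro w hw
            rw [hnTdef, Finset.mem_filter] at hw
            exact le_of_lt (not_le.mp hw.2)
        _ ≤ ∑ i, (D i : ℝ) := by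
            apply Finset.sum_le_sum_of_subset_of_nonneg (Finset.filter_subset _ _)
            intro i _ _; positivity
        _ ≤ dbar * n := hsumD
    nlinarith [h1, hdpos]
  have hTcard : 2 * (n : ℝ) / 3 ≤ (Ts.card : ℝ) := by
    have : (Ts.card : ℝ) + (nT.card : ℝ) = n := by exact_mod_cast hTsplit
    linarith
  set Xs := Finset.univ.filter (Xp n D dbar G) with hXsdef
  have hTX : Ts ⊆ Xs ∪ Wg n D dbar G := by
    intro u hu
    rw [hTsdef, Finset.mem_filter] at hu
    by_cases hX : ∀ u', (n : ℝ) ^ ((1 : ℝ) / 3) ≤ (D u' : ℝ) → ¬ G.Adj u' u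
    · apply Finset.mem_union_left
      rw [hXsdef, Finset.mem_filter]
      exact ⟨Finset.mem_univ _, hu.2, hX⟩
    · apply Finset.mem_union_right
      push_neg at hX
      obtain ⟨u', hu1, hu2⟩ := hX
      rw [Wg, Finset.mem_filter]
      exact ⟨Finset.mem_univ _, hu.2,
        fun hc => absurd (lt_of_le_of_lt hu.2 hA) (not_lt.mpr hc), u', hu1, hu2⟩
  have hXcard : 2 * (n : ℝ) / 3 - j ≤ (Xs.card : ℝ) := by
    have h1 : Ts.card ≤ Xs.card + (Wg n D dbar G).card :=
      le_trans (Finset.card_le_card hTX) (Finset.card_union_le _ _)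
    have h2 : (Ts.card : ℝ) ≤ (Xs.card : ℝ) + (Wg n D dbar G).card := by exact_mod_cast h1
    have h3 : ((Wg n D dbar G).card : ℝ) ≤ j := by exact_mod_cast hcnt
    linarith
  set EX := Xs.sigma (fun x => G.neighborFinset x) with hEXdef
  have hEX : (Xs.card : ℝ) ≤ (EX.card : ℝ) := by
    have : Xs.card ≤ EX.card := by
      rw [hEXdef, Finset.card_sigma]
      calc Xs.card = ∑ _x ∈ Xs, 1 := by rw [Finset.sum_const, smul_eq_mul, mul_one]
        _ ≤ ∑ x ∈ Xs, (G.neighborFinset x).card := by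
            apply Finset.sum_le_sum
            intro x _
            rw [hdeg x]
            exact hD1 x
    exact_mod_cast this
  -- the product and its split
  set Pr2 := P1 ×ˢ EX with hPr2def
  set goodS := Pr2.filter (fun pe => ¬ G.Adj pe.1.2 pe.2.2 ∧ pe.2.2 ≠ pe.1.2) with hgooddef
  set badS := Pr2.filter (fun pe => ¬ (¬ G.Adj pe.1.2 pe.2.2 ∧ pe.2.2 ≠ pe.1.2)) with hbaddef
  have hsplit2 : goodS.card + badS.card = P1.card * EX.card := by
    rw [hgooddef, hbaddef, Finset.card_filter_add_card_filter_not, hPr2def,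
      Finset.card_product]
  have hgood : goodS.card ≤ (Qset n D dbar G).card := by
    apply Finset.card_le_card_of_injOn (fun pe => (pe.1.1, pe.1.2, pe.2.1, pe.2.2))
    · intro pe hpe
      rw [hgooddef, Finset.mem_coe, Finset.mem_filter, hPr2def, Finset.mem_product] at hpe
      obtain ⟨⟨hp, he⟩, hna, hne⟩ := hpe
      rw [hP1def, Finset.mem_filter, hP0def, Finset.mem_sigma] at hp
      rw [hEXdef, Finset.mem_sigma] at he
      obtain ⟨⟨hv, hw⟩, hnT'⟩ := hp
      obtain ⟨hx, hy⟩ := he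
      rw [hS3s, Finset.mem_filter] at hv
      rw [hXsdef, Finset.mem_filter] at hx
      rw [Qset, Finset.mem_coe, Finset.mem_filter]
      exact ⟨Finset.mem_univ _, hv.2, (SimpleGraph.mem_neighborFinset _ _ _).mp hw, hnT', hx.2,
        (SimpleGraph.mem_neighborFinset _ _ _).mp hy, hna, hne⟩
    · intro pe1 _ pe2 _ he
      simp only [Prod.mk.injEq] at he
      obtain ⟨h1, h2, h3, h4⟩ := he
      have hp : pe1.1 = pe2.1 := Sigma.ext h1 (heq_of_eq h2)
      have hq : pe1.2 = pe2.2 := Sigma.ext h3 (heq_of_eq h4)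
      exact Prod.ext hp hq
  -- bound on badS
  set Big := P1.sigma (fun p => (insert p.2 (G.neighborFinset p.2)).sigma
      (fun y' => Finset.univ.filter (fun x' => Xp n D dbar G x' ∧ G.Adj x' y'))) with hBigdef
  have hbad1 : badS.card ≤ Big.card := by
    apply Finset.card_le_card_of_injOn (fun pe => ⟨pe.1, pe.2.2, pe.2.1⟩)
    · intro pe hpe
      rw [hbaddef, Finset.mem_coe, Finset.mem_filter, hPr2def, Finset.mem_product] at hpe
      obtain ⟨⟨hp, he⟩, hbad⟩ := hpe
      rw [hEXdef, Finset.mem_sigma] at he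
      obtain ⟨hx, hy⟩ := he
      rw [hXsdef, Finset.mem_filter] at hx
      rw [hBigdef, Finset.mem_coe, Finset.mem_sigma]
      refine ⟨hp, ?_⟩
      rw [Finset.mem_sigma]
      constructor
      · rw [Finset.mem_insert]
        by_cases hadj : G.Adj pe.1.2 pe.2.2
        · right; exact (SimpleGraph.mem_neighborFinset _ _ _).mpr hadj
        · left
          by_contra hne
          exact hbad ⟨hadj, hne⟩
      · rw [Finset.mem_filter]
        exact ⟨Finset.mem_univ _, hx.2, (SimpleGraph.mem_neighborFinset _ _ _).mp hy⟩
    · intro pe1 _ pe2 _ he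
      simp only [Sigma.mk.inj_iff, heq_eq_eq] at he
      obtain ⟨h1, h2, h3⟩ := he
      have hq : pe1.2 = pe2.2 := Sigma.ext h3 (heq_of_eq h2)
      exact Prod.ext h1 hq
  have hS3card : (S3s.card : ℝ) ≤ dbar * (n : ℝ) ^ ((1 : ℝ) / 5) := by
    have h1 : (S3s.card : ℝ) * (n : ℝ) ^ ((4 : ℝ) / 5) ≤ dbar * n := by
      calc (S3s.card : ℝ) * (n : ℝ) ^ ((4 : ℝ) / 5) = ∑ _v ∈ S3s, (n : ℝ) ^ ((4 : ℝ) / 5) := by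
            rw [Finset.sum_const, nsmul_eq_mul]; try ring
        _ ≤ ∑ v ∈ S3s, (D v : ℝ) := by
            apply Finset.sum_le_sum
            intro v hv
            rw [hS3s, Finset.mem_filter] at hv
            exact hv.2
        _ ≤ ∑ i, (D i : ℝ) := by
            apply Finset.sum_le_sum_of_subset_of_nonneg (Finset.filter_subset _ _)
            intro i _ _; positivity
        _ ≤ dbar * n := hsumD
    have hnn : (n : ℝ) = (n : ℝ) ^ ((4 : ℝ) / 5) * (n : ℝ) ^ ((1 : ℝ) / 5) := by
      rw [← Real.rpow_add hnR]
      norm_num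
    have hpow : (0 : ℝ) < (n : ℝ) ^ ((4 : ℝ) / 5) := Real.rpow_pos_of_pos hnR _
    apply le_of_mul_le_mul_right _ hpow
    calc (S3s.card : ℝ) * (n : ℝ) ^ ((4 : ℝ) / 5)
        ≤ dbar * n := h1
      _ = dbar * ((n : ℝ) ^ ((1 : ℝ) / 5) * (n : ℝ) ^ ((4 : ℝ) / 5)) := by
          rw [← Real.rpow_add hnR]
          norm_num
      _ = dbar * (n : ℝ) ^ ((1 : ℝ) / 5) * (n : ℝ) ^ ((4 : ℝ) / 5) := by ring
  have hbad2 : (Big.card : ℝ) ≤ (n : ℝ) ^ ((1 : ℝ) / 3) * ((S3s.card : ℝ) * (dbar * n + n)) := by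
    have hinner : ∀ p ∈ P1, ∀ y' : Fin n,
        (((Finset.univ.filter (fun x' => Xp n D dbar G x' ∧ G.Adj x' y')).card : ℝ))
          ≤ (n : ℝ) ^ ((1 : ℝ) / 3) := by
      intro p _ y'
      by_cases hne : (Finset.univ.filter (fun x' => Xp n D dbar G x' ∧ G.Adj x' y')).Nonempty
      · obtain ⟨x', hx'⟩ := hne
        rw [Finset.mem_filter] at hx'
        have hyS2 : ¬ (n : ℝ) ^ ((1 : ℝ) / 3) ≤ (D y' : ℝ) := by
          intro hc
          exact hx'.2.1.2 y' hc hx'.2.2.symm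
        have hsub : (Finset.univ.filter (fun x' => Xp n D dbar G x' ∧ G.Adj x' y'))
            ⊆ G.neighborFinset y' := by
          intro a ha
          rw [Finset.mem_filter] at ha
          exact (SimpleGraph.mem_neighborFinset _ _ _).mpr ha.2.2.symm
        calc (((Finset.univ.filter (fun x' => Xp n D dbar G x' ∧ G.Adj x' y')).card : ℝ))
            ≤ ((G.neighborFinset y').card : ℝ) := by exact_mod_cast Finset.card_le_card hsub
          _ = (D y' : ℝ) := by rw [hdeg y']
          _ ≤ (n : ℝ) ^ ((1 : ℝ) / 3) := le_of_lt (not_le.mp hyS2)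
      · rw [Finset.not_nonempty_iff_eq_empty] at hne
        rw [hne]
        simp only [Finset.card_empty, Nat.cast_zero]
        positivity
    have h1 : (Big.card : ℝ) ≤ ∑ p ∈ P1, ((D p.2 : ℝ) + 1) * (n : ℝ) ^ ((1 : ℝ) / 3) := by
      rw [hBigdef, Finset.card_sigma]
      push_cast
      apply Finset.sum_le_sum
      intro p hp
      rw [Finset.card_sigma]
      push_cast
      calc (∑ y' ∈ insert p.2 (G.neighborFinset p.2),
            (((Finset.univ.filter (fun x' => Xp n D dbar G x' ∧ G.Adj x' y')).card : ℝ)))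
          ≤ ∑ _y' ∈ insert p.2 (G.neighborFinset p.2), (n : ℝ) ^ ((1 : ℝ) / 3) :=
            Finset.sum_le_sum (fun y' _ => hinner p hp y')
        _ = ((insert p.2 (G.neighborFinset p.2)).card : ℝ) * (n : ℝ) ^ ((1 : ℝ) / 3) := by
            rw [Finset.sum_const, nsmul_eq_mul]
        _ ≤ ((D p.2 : ℝ) + 1) * (n : ℝ) ^ ((1 : ℝ) / 3) := by
            apply mul_le_mul_of_nonneg_right _ (by positivity)
            have := Finset.card_insert_le p.2 (G.neighborFinset p.2)
            have h2 : ((insert p.2 (G.neighborFinset p.2)).card : ℝ)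
                ≤ ((G.neighborFinset p.2).card : ℝ) + 1 := by exact_mod_cast this
            rw [hdeg p.2] at h2
            linarith
    have h2 : ∑ p ∈ P1, ((D p.2 : ℝ) + 1) ≤ (S3s.card : ℝ) * (dbar * n + n) := by
      calc ∑ p ∈ P1, ((D p.2 : ℝ) + 1) ≤ ∑ p ∈ P0, ((D p.2 : ℝ) + 1) := by
            apply Finset.sum_le_sum_of_subset_of_nonneg (Finset.filter_subset _ _)
            intro p _ _; positivity
        _ = ∑ v ∈ S3s, ∑ w ∈ G.neighborFinset v, ((D w : ℝ) + 1) := by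
            rw [hP0def, Finset.sum_sigma]
        _ ≤ ∑ _v ∈ S3s, (dbar * n + n) := by
            apply Finset.sum_le_sum
            intro v _
            calc ∑ w ∈ G.neighborFinset v, ((D w : ℝ) + 1)
                ≤ ∑ w, ((D w : ℝ) + 1) := by
                  apply Finset.sum_le_sum_of_subset_of_nonneg (Finset.subset_univ _)
                  intro w _ _; positivity
              _ = (∑ i, (D i : ℝ)) + n := by
                  rw [Finset.sum_add_distrib, Finset.sum_const, Finset.card_univ,
                    Fintype.card_fin, nsmul_eq_mul, mul_one]
              _ ≤ dbar * n + n := by linarith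
        _ = (S3s.card : ℝ) * (dbar * n + n) := by
            rw [Finset.sum_const, nsmul_eq_mul]
    have h3 : ∑ p ∈ P1, ((D p.2 : ℝ) + 1) * (n : ℝ) ^ ((1 : ℝ) / 3)
        = (∑ p ∈ P1, ((D p.2 : ℝ) + 1)) * (n : ℝ) ^ ((1 : ℝ) / 3) := by
      rw [← Finset.sum_mul]
    have hpow : (0 : ℝ) ≤ (n : ℝ) ^ ((1 : ℝ) / 3) := by positivity
    calc (Big.card : ℝ) ≤ ∑ p ∈ P1, ((D p.2 : ℝ) + 1) * (n : ℝ) ^ ((1 : ℝ) / 3) := h1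
      _ = (∑ p ∈ P1, ((D p.2 : ℝ) + 1)) * (n : ℝ) ^ ((1 : ℝ) / 3) := h3
      _ ≤ (S3s.card : ℝ) * (dbar * n + n) * (n : ℝ) ^ ((1 : ℝ) / 3) := by
          apply mul_le_mul_of_nonneg_right h2 hpow
      _ = (n : ℝ) ^ ((1 : ℝ) / 3) * ((S3s.card : ℝ) * (dbar * n + n)) := by ring
  have hbadS : (badS.card : ℝ) ≤ 2 * dbar ^ 2 * (n : ℝ) ^ ((23 : ℝ) / 15) := by
    have h0 : (badS.card : ℝ) ≤ (Big.card : ℝ) := by exact_mod_cast hbad1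
    have h1 : dbar * n + n ≤ 2 * dbar * n := by nlinarith
    have h2 : (S3s.card : ℝ) * (dbar * n + n) ≤ dbar * (n : ℝ) ^ ((1 : ℝ) / 5) * (2 * dbar * n) := by
      apply mul_le_mul hS3card h1 (by positivity) (by positivity)
    have h3 : (n : ℝ) ^ ((1 : ℝ) / 3) * (dbar * (n : ℝ) ^ ((1 : ℝ) / 5) * (2 * dbar * n))
        = 2 * dbar ^ 2 * ((n : ℝ) ^ ((1 : ℝ) / 3) * (n : ℝ) ^ ((1 : ℝ) / 5) * n) := by ring
    have h4 : (n : ℝ) ^ ((1 : ℝ) / 3) * (n : ℝ) ^ ((1 : ℝ) / 5) * n = (n : ℝ) ^ ((23 : ℝ) / 15) := by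
      rw [← Real.rpow_add hnR]
      nth_rewrite 2 [show (n : ℝ) = (n : ℝ) ^ (1 : ℝ) by rw [Real.rpow_one]]
      rw [← Real.rpow_add hnR]
      norm_num
    have h5 : (n : ℝ) ^ ((1 : ℝ) / 3) * ((S3s.card : ℝ) * (dbar * n + n))
        ≤ 2 * dbar ^ 2 * (n : ℝ) ^ ((23 : ℝ) / 15) := by
      rw [← h4, ← h3]
      apply mul_le_mul_of_nonneg_left h2 (by positivity)
    linarith [hbad2]
  -- final assembly
  have hfin1 : (ε * n / 10 - 3 * dbar * j) * (2 * n / 3 - (j : ℝ))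
      ≤ (P1.card : ℝ) * (EX.card : ℝ) := by
    apply mul_le_mul hP1 (le_trans hXcard hEX) (by linarith) (by positivity)
  have hfin2 : (goodS.card : ℝ) + (badS.card : ℝ) = (P1.card : ℝ) * (EX.card : ℝ) := by
    exact_mod_cast hsplit2
  have hfin3 : (goodS.card : ℝ) ≤ ((Qset n D dbar G).card : ℝ) := by exact_mod_cast hgood
  linarith

end Analytic

section Step
variable (ε : ℝ)
variable (hA : 3 * dbar < (n : ℝ) ^ ((1 : ℝ) / 3))
  (hAB : (n : ℝ) ^ ((1 : ℝ) / 3) ≤ (n : ℝ) ^ ((4 : ℝ) / 5))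
  (hdbar : 1 ≤ dbar) (hnpos : 0 < n) (hε : 0 < ε)
  (hD1 : ∀ w, 1 ≤ D w) (hsumD : (∑ i, (D i : ℝ)) ≤ dbar * n)
  (hS3 : ε * n / 10 ≤ ∑ u ∈ Finset.univ.filter
      (fun u : Fin n => (n : ℝ) ^ ((4 : ℝ) / 5) ≤ (D u : ℝ)), (D u : ℝ))
  (hC1 : 3 * dbar * (2 * ε ^ 2 * (n : ℝ) + 2) ≤ ε * (n : ℝ) / 50)
  (hC2 : 2 * ε ^ 2 * (n : ℝ) + 2 ≤ (n : ℝ) / 6)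
  (hB2 : 2 * dbar ^ 2 * (n : ℝ) ^ ((23 : ℝ) / 15) ≤ ε * (n : ℝ) ^ 2 / 100)
  (hE : (2 * ε ^ 2 * (n : ℝ) + 4) * (dbar * (n : ℝ)) ≤ 3 * ε * (n : ℝ) ^ 2 / 1000)

include hA hAB hdbar hnpos hε hD1 hsumD hS3 hC1 hC2 hB2 hE in
set_option maxHeartbeats 1600000 in
lemma step_ratio {j : ℕ} (hj : (j : ℝ) ≤ 2 * ε ^ 2 * (n : ℝ) + 2) :
    10 * ((Cle n D dbar j).card : ℝ) ≤ ((Cle n D dbar (j + 2)).card : ℝ) := by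
  classical
  have hnR : (0 : ℝ) < n := by exact_mod_cast hnpos
  have hdpos : (0 : ℝ) < dbar := lt_of_lt_of_le zero_lt_one hdbar
  have hjd : 3 * dbar * (j : ℝ) ≤ ε * n / 50 := by
    have : 3 * dbar * (j : ℝ) ≤ 3 * dbar * (2 * ε ^ 2 * (n : ℝ) + 2) := by
      apply mul_le_mul_of_nonneg_left hj (by positivity)
    linarith
  have hεn : (0:ℝ) ≤ ε * (n : ℝ) := by positivity
  have hj1 : 0 ≤ ε * n / 10 - 3 * dbar * (j : ℝ) := by linarith
  have hj2 : (j : ℝ) ≤ 2 * (n : ℝ) / 3 := by linarith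
  -- lower bound for Fq
  have hFq : 3 * ε * (n : ℝ) ^ 2 / 100 ≤
      (ε * n / 10 - 3 * dbar * j) * (2 * n / 3 - (j : ℝ))
        - 2 * dbar ^ 2 * (n : ℝ) ^ ((23 : ℝ) / 15) := by
    have h1 : ε * n / 10 - ε * n / 50 ≤ ε * n / 10 - 3 * dbar * (j : ℝ) := by linarith
    have h2 : 2 * n / 3 - (n : ℝ) / 6 ≤ 2 * n / 3 - (j : ℝ) := by linarith
    have h3 : (ε * n / 10 - ε * n / 50) * (2 * n / 3 - (n : ℝ) / 6)
        ≤ (ε * n / 10 - 3 * dbar * j) * (2 * n / 3 - (j : ℝ)) := by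
      apply mul_le_mul h1 h2 (by linarith) (by linarith)
    nlinarith
  -- lower bound the LHS sum
  have hlow : ((Cle n D dbar j).card : ℝ) * (3 * ε * (n : ℝ) ^ 2 / 100)
      ≤ ∑ G ∈ Cle n D dbar j, ((Qset n D dbar G).card : ℝ) := by
    calc ((Cle n D dbar j).card : ℝ) * (3 * ε * (n : ℝ) ^ 2 / 100)
        = ∑ _G ∈ Cle n D dbar j, 3 * ε * (n : ℝ) ^ 2 / 100 := by
          rw [Finset.sum_const, nsmul_eq_mul]
      _ ≤ ∑ G ∈ Cle n D dbar j, ((Qset n D dbar G).card : ℝ) := by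
          apply Finset.sum_le_sum
          intro G hG
          rw [Cle, Finset.mem_filter] at hG
          refine le_trans hFq (le_trans ?_ (le_refl _))
          exact qset_lower ε hA hAB hdbar hnpos hG.1 hG.2 hD1 hsumD hS3 hj1 hj2
  -- upper bound the RHS sum
  have hup : ∑ G' ∈ Cle n D dbar (j + 2), ((Rset n D dbar G').card : ℝ)
      ≤ ((Cle n D dbar (j + 2)).card : ℝ) * (3 * ε * (n : ℝ) ^ 2 / 1000) := by
    calc ∑ G' ∈ Cle n D dbar (j + 2), ((Rset n D dbar G').card : ℝ)
        ≤ ∑ _G' ∈ Cle n D dbar (j + 2), 3 * ε * (n : ℝ) ^ 2 / 1000 := by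
          apply Finset.sum_le_sum
          intro G' hG'
          rw [Cle, Finset.mem_filter] at hG'
          have h1 : (Rset n D dbar G').card ≤ (Wg n D dbar G').card * ∑ i, D i :=
            card_Rset_le hG'.1
          have h2 : ((Rset n D dbar G').card : ℝ)
              ≤ ((Wg n D dbar G').card : ℝ) * ((∑ i, D i : ℕ) : ℝ) := by exact_mod_cast h1
          have h3 : ((∑ i, D i : ℕ) : ℝ) = ∑ i, (D i : ℝ) := by push_cast; rfl
          have h4 : ((Wg n D dbar G').card : ℝ) ≤ (j : ℝ) + 2 := by
            have := hG'.2
            have : ((Wg n D dbar G').card : ℝ) ≤ ((j + 2 : ℕ) : ℝ) := by exact_mod_cast this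
            push_cast at this
            linarith
          have h5 : (0 : ℝ) ≤ ∑ i, (D i : ℝ) := by positivity
          calc ((Rset n D dbar G').card : ℝ)
              ≤ ((Wg n D dbar G').card : ℝ) * (∑ i, (D i : ℝ)) := by rw [← h3]; exact h2
            _ ≤ ((j : ℝ) + 2) * (dbar * n) := by
                apply mul_le_mul h4 hsumD h5 (by positivity)
            _ ≤ (2 * ε ^ 2 * (n : ℝ) + 4) * (dbar * n) := by
                apply mul_le_mul_of_nonneg_right _ (by positivity)
                linarith
            _ ≤ 3 * ε * (n : ℝ) ^ 2 / 1000 := hE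
      _ = ((Cle n D dbar (j + 2)).card : ℝ) * (3 * ε * (n : ℝ) ^ 2 / 1000) := by
          rw [Finset.sum_const, nsmul_eq_mul]
  -- combine via step_count
  have hmid : ∑ G ∈ Cle n D dbar j, ((Qset n D dbar G).card : ℝ)
      ≤ ∑ G' ∈ Cle n D dbar (j + 2), ((Rset n D dbar G').card : ℝ) := by
    have := step_count hA hAB (D := D) j
    have h1 : ∑ G ∈ Cle n D dbar j, ((Qset n D dbar G).card : ℝ)
        = ((∑ G ∈ Cle n D dbar j, (Qset n D dbar G).card : ℕ) : ℝ) := by push_cast; rfl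
    have h2 : ∑ G' ∈ Cle n D dbar (j + 2), ((Rset n D dbar G').card : ℝ)
        = ((∑ G' ∈ Cle n D dbar (j + 2), (Rset n D dbar G').card : ℕ) : ℝ) := by push_cast; rfl
    rw [h1, h2]
    exact_mod_cast this
  have hkey : ((Cle n D dbar j).card : ℝ) * (3 * ε * (n : ℝ) ^ 2 / 100)
      ≤ ((Cle n D dbar (j + 2)).card : ℝ) * (3 * ε * (n : ℝ) ^ 2 / 1000) :=
    le_trans hlow (le_trans hmid hup)
  have hc : (0 : ℝ) < 3 * ε * (n : ℝ) ^ 2 / 1000 := by positivity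
  nlinarith [hkey, hc]

include hA hAB hdbar hnpos hε hD1 hsumD hS3 hC1 hC2 hB2 hE in
lemma chain_ratio {K : ℕ} (hK : (K : ℝ) ≤ ε ^ 2 * (n : ℝ)) :
    ∀ i : ℕ, 2 * i ≤ K + 2 →
      ((Cle n D dbar K).card : ℝ) ≤ (1 / 10) ^ i * ((Cle n D dbar (K + 2 * i)).card : ℝ) := by
  intro i
  induction i with
  | zero => intro _; simp
  | succ i ih =>
    intro hi
    have hi' : 2 * i ≤ K + 2 := by omega
    have h1 := ih hi'
    have hstep : 10 * ((Cle n D dbar (K + 2 * i)).card : ℝ)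
        ≤ ((Cle n D dbar (K + 2 * i + 2)).card : ℝ) := by
      apply step_ratio ε hA hAB hdbar hnpos hε hD1 hsumD hS3 hC1 hC2 hB2 hE
      have h2i : 2 * i ≤ K := by omega
      have hcast : ((K + 2 * i : ℕ) : ℝ) ≤ 2 * (K : ℝ) + 2 := by
        have h' : ((2 * i : ℕ) : ℝ) ≤ (K : ℝ) := by exact_mod_cast h2i
        push_cast at h' ⊢
        linarith
      calc ((K + 2 * i : ℕ) : ℝ) ≤ 2 * (K : ℝ) + 2 := hcast
        _ ≤ 2 * ε ^ 2 * (n : ℝ) + 2 := by linarith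
    have heq : K + 2 * (i + 1) = K + 2 * i + 2 := by omega
    rw [heq]
    calc ((Cle n D dbar K).card : ℝ)
        ≤ (1 / 10) ^ i * ((Cle n D dbar (K + 2 * i)).card : ℝ) := h1
      _ ≤ (1 / 10) ^ i * ((1 / 10) * ((Cle n D dbar (K + 2 * i + 2)).card : ℝ)) := by
          apply mul_le_mul_of_nonneg_left _ (by positivity)
          linarith
      _ = (1 / 10) ^ (i + 1) * ((Cle n D dbar (K + 2 * i + 2)).card : ℝ) := by ring

end Step
end Main

lemma sq_le_two_pow : ∀ s : ℕ, 4 ≤ s → s * s ≤ 2 ^ s := by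
  intro s
  induction s with
  | zero => omega
  | succ s ih =>
    intro hs
    by_cases h4 : 4 ≤ s
    · have h1 := ih h4
      have h2 : 2 ^ (s + 1) = 2 ^ s + 2 ^ s := by ring
      nlinarith [h1, h4]
    · interval_cases s <;> simp_all <;> omega


set_option maxHeartbeats 2000000 in
/-- **Lemma (many low-degree vertices are neighbours of `S₂`).**
With `T = {u : d(u) ≤ 3d̄}`, `S₂ = {u : d(u) ≥ n^{1/3}}`, `S₃ = {u : d(u) ≥ n^{4/5}}`
and `Σ_{u∈S₃} d(u) ≥ εn`, the probability that `|N(S₂) ∩ T| ≤ ε²n` is at most `1/n`. -/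
theorem many_T_vertices_in_NS2 :
    ∀ dbar : ℝ, 1 ≤ dbar → ∀ ε : ℝ, 0 < ε → 1000 * ε ≤ 1 / dbar →
    ∃ n₀ : ℕ, ∀ n : ℕ, n₀ ≤ n →
    ∀ D : Fin n → ℕ, (∀ w, 1 ≤ D w) →
    (graphsWithDegreeSeq n D).Nonempty →
    (∑ i, (D i : ℝ)) ≤ dbar * n →
    ε * n / 10 ≤ (∑ u ∈ Finset.univ.filter
        (fun u : Fin n => (n : ℝ) ^ ((4 : ℝ) / 5) ≤ (D u : ℝ)), (D u : ℝ)) →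
    uniformProb n D (fun G =>
        ((Finset.univ.filter (fun w : Fin n =>
            (D w : ℝ) ≤ 3 * dbar ∧
            ¬ (n : ℝ) ^ ((1 : ℝ) / 3) ≤ (D w : ℝ) ∧
            ∃ v : Fin n, (n : ℝ) ^ ((1 : ℝ) / 3) ≤ (D v : ℝ) ∧ G.Adj v w)).card : ℝ)
          ≤ ε ^ 2 * n)
      ≤ 1 / n := by
  intro dbar hdbar ε hε hεd
  have hdpos : (0 : ℝ) < dbar := lt_of_lt_of_le zero_lt_one hdbar
  have h1000 : ε * dbar ≤ 1 / 1000 := by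
    have h1 : 1000 * ε * dbar ≤ (1 / dbar) * dbar :=
      mul_le_mul_of_nonneg_right hεd hdpos.le
    rw [one_div, inv_mul_cancel₀ (ne_of_gt hdpos)] at h1
    linarith
  have hε1 : ε ≤ 1 / 1000 := by nlinarith
  -- the eventual conditions
  have hrpow13 : Filter.Tendsto (fun m : ℕ => ((m : ℝ)) ^ ((1 : ℝ) / 3))
      Filter.atTop Filter.atTop :=
    (tendsto_rpow_atTop (by norm_num)).comp tendsto_natCast_atTop_atTop
  have hrpow715 : Filter.Tendsto (fun m : ℕ => ((m : ℝ)) ^ ((7 : ℝ) / 15))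
      Filter.atTop Filter.atTop :=
    (tendsto_rpow_atTop (by norm_num)).comp tendsto_natCast_atTop_atTop
  have hlin : Filter.Tendsto (fun m : ℕ => ((m : ℝ))) Filter.atTop Filter.atTop :=
    tendsto_natCast_atTop_atTop
  have hev : ∀ᶠ m : ℕ in Filter.atTop,
      (1 ≤ m) ∧
      (3 * dbar + 1 ≤ ((m : ℝ)) ^ ((1 : ℝ) / 3)) ∧
      (600 * dbar / ε ≤ (m : ℝ)) ∧
      ((24 : ℝ) ≤ (m : ℝ)) ∧
      (200 * dbar ^ 2 / ε ≤ ((m : ℝ)) ^ ((7 : ℝ) / 15)) ∧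
      (4000 * dbar / ε ≤ (m : ℝ)) ∧
      (18 / ε ^ 2 ≤ (m : ℝ)) ∧
      (64 / ε ^ 4 ≤ (m : ℝ)) := by
    filter_upwards [Filter.eventually_ge_atTop 1,
      hrpow13.eventually_ge_atTop (3 * dbar + 1),
      hlin.eventually_ge_atTop (600 * dbar / ε),
      hlin.eventually_ge_atTop (24 : ℝ),
      hrpow715.eventually_ge_atTop (200 * dbar ^ 2 / ε),
      hlin.eventually_ge_atTop (4000 * dbar / ε),
      hlin.eventually_ge_atTop (18 / ε ^ 2),
      hlin.eventually_ge_atTop (64 / ε ^ 4)] with m e0 e1 e2 e3 e4 e5 e6 e7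
    exact ⟨e0, e1, e2, e3, e4, e5, e6, e7⟩
  obtain ⟨n₀, hn₀⟩ := Filter.eventually_atTop.mp hev
  refine ⟨n₀, ?_⟩
  intro n hn D hD1 hNE hsumD hS3
  obtain ⟨e0, e1, e2, e3, e4, e5, e6, e7⟩ := hn₀ n hn
  set N := (n : ℝ) with hN
  have hnpos : 0 < n := e0
  have hN0 : (0 : ℝ) < N := by rw [hN]; exact_mod_cast hnpos
  have hN1 : (1 : ℝ) ≤ N := by rw [hN]; exact_mod_cast e0
  have hA : 3 * dbar < N ^ ((1 : ℝ) / 3) := by linarith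
  have hAB : N ^ ((1 : ℝ) / 3) ≤ N ^ ((4 : ℝ) / 5) :=
    Real.rpow_le_rpow_of_exponent_le hN1 (by norm_num)
  have hεN : (0 : ℝ) ≤ ε * N := by positivity
  have he2' : 6 * dbar ≤ ε * N / 100 := by
    have h := mul_le_mul_of_nonneg_right e2 hε.le
    rw [div_mul_cancel₀ _ (ne_of_gt hε)] at h
    nlinarith [h]
  have hC1 : 3 * dbar * (2 * ε ^ 2 * N + 2) ≤ ε * N / 50 := by
    have hkey : ε * dbar * (ε * N) ≤ (1 / 1000) * (ε * N) :=
      mul_le_mul_of_nonneg_right h1000 hεN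
    nlinarith [hkey, he2']
  have hC2 : 2 * ε ^ 2 * N + 2 ≤ N / 6 := by
    have hkey : ε * ε * N ≤ (1 / 1000) * (1 / 1000) * N := by
      apply mul_le_mul_of_nonneg_right _ hN0.le
      exact mul_le_mul hε1 hε1 hε.le (by norm_num)
    nlinarith [hkey, e3]
  have hB2 : 2 * dbar ^ 2 * N ^ ((23 : ℝ) / 15) ≤ ε * N ^ 2 / 100 := by
    have h1 : dbar ^ 2 ≤ (ε / 200) * N ^ ((7 : ℝ) / 15) := by
      have := mul_le_mul_of_nonneg_left e4 (le_of_lt (show (0:ℝ) < ε / 200 by positivity))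
      calc dbar ^ 2 = (ε / 200) * (200 * dbar ^ 2 / ε) := by field_simp
        _ ≤ (ε / 200) * N ^ ((7 : ℝ) / 15) := this
    have h2 : N ^ ((7 : ℝ) / 15) * N ^ ((23 : ℝ) / 15) = N ^ (2 : ℝ) := by
      rw [← Real.rpow_add hN0]
      norm_num
    have h3 : N ^ (2 : ℝ) = N ^ 2 := by
      rw [show ((2 : ℝ)) = ((2 : ℕ) : ℝ) by norm_num, Real.rpow_natCast]
    have hpow : (0 : ℝ) ≤ N ^ ((23 : ℝ) / 15) := by positivity
    calc 2 * dbar ^ 2 * N ^ ((23 : ℝ) / 15)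
        ≤ 2 * ((ε / 200) * N ^ ((7 : ℝ) / 15)) * N ^ ((23 : ℝ) / 15) := by
          apply mul_le_mul_of_nonneg_right _ hpow
          linarith
      _ = (ε / 100) * (N ^ ((7 : ℝ) / 15) * N ^ ((23 : ℝ) / 15)) := by ring
      _ = ε * N ^ 2 / 100 := by rw [h2, h3]; ring
  have hE : (2 * ε ^ 2 * N + 4) * (dbar * N) ≤ 3 * ε * N ^ 2 / 1000 := by
    have hkey : ε * dbar * (ε * N ^ 2) ≤ (1 / 1000) * (ε * N ^ 2) :=
      mul_le_mul_of_nonneg_right h1000 (by positivity)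
    have hkey2 : 4000 * dbar * N ≤ ε * N * N := by
      have := mul_le_mul_of_nonneg_right e5 hN0.le
      calc 4000 * dbar * N = 4000 * dbar / ε * ε * N := by field_simp
        _ ≤ N * ε * N := by
            apply mul_le_mul_of_nonneg_right _ hN0.le
            calc 4000 * dbar / ε * ε = 4000 * dbar / ε * ε := rfl
              _ ≤ N * ε := by
                  apply mul_le_mul_of_nonneg_right e5 hε.le
        _ = ε * N * N := by ring
    nlinarith [hkey, hkey2]
  -- set up the chain
  set K := ⌊ε ^ 2 * N⌋₊ with hKdef
  have hK : (K : ℝ) ≤ ε ^ 2 * N := Nat.floor_le (by positivity)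
  set s := K / 2 with hsdef
  have hs2 : 2 * s ≤ K + 2 := by omega
  have hchain := chain_ratio (n := n) (D := D) (dbar := dbar) ε hA hAB hdbar hnpos hε hD1
    hsumD hS3 hC1 hC2 hB2 hE hK s hs2
  -- event is inside Cle K
  have hsub : (graphsWithDegreeSeq n D).filter (fun G =>
      ((Finset.univ.filter (fun w : Fin n =>
          (D w : ℝ) ≤ 3 * dbar ∧
          ¬ (n : ℝ) ^ ((1 : ℝ) / 3) ≤ (D w : ℝ) ∧
          ∃ v : Fin n, (n : ℝ) ^ ((1 : ℝ) / 3) ≤ (D v : ℝ) ∧ G.Adj v w)).card : ℝ)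
        ≤ ε ^ 2 * n) ⊆ Cle n D dbar K := by
    intro G hG
    rw [Finset.mem_filter] at hG
    rw [Cle, Finset.mem_filter]
    refine ⟨hG.1, ?_⟩
    apply Nat.le_floor
    exact hG.2
  have hΩpos : 0 < (graphsWithDegreeSeq n D).card := Finset.card_pos.mpr hNE
  have hΩposR : (0 : ℝ) < ((graphsWithDegreeSeq n D).card : ℝ) := by exact_mod_cast hΩpos
  have hcle_omega : ((Cle n D dbar (K + 2 * s)).card : ℝ)
      ≤ ((graphsWithDegreeSeq n D).card : ℝ) := by
    have : Cle n D dbar (K + 2 * s) ⊆ graphsWithDegreeSeq n D := Finset.filter_subset _ _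
    exact_mod_cast Finset.card_le_card this
  have hcard_event : (((graphsWithDegreeSeq n D).filter (fun G =>
      ((Finset.univ.filter (fun w : Fin n =>
          (D w : ℝ) ≤ 3 * dbar ∧
          ¬ (n : ℝ) ^ ((1 : ℝ) / 3) ≤ (D w : ℝ) ∧
          ∃ v : Fin n, (n : ℝ) ^ ((1 : ℝ) / 3) ≤ (D v : ℝ) ∧ G.Adj v w)).card : ℝ)
        ≤ ε ^ 2 * n)).card : ℝ) ≤ (1 / 10) ^ s * ((graphsWithDegreeSeq n D).card : ℝ) := by
    calc (((graphsWithDegreeSeq n D).filter _).card : ℝ)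
        ≤ ((Cle n D dbar K).card : ℝ) := by exact_mod_cast Finset.card_le_card hsub
      _ ≤ (1 / 10) ^ s * ((Cle n D dbar (K + 2 * s)).card : ℝ) := hchain
      _ ≤ (1 / 10) ^ s * ((graphsWithDegreeSeq n D).card : ℝ) := by
          apply mul_le_mul_of_nonneg_left hcle_omega (by positivity)
  -- Now the numeric bound (1/10)^s ≤ 1/n
  have hK18 : 18 ≤ K := by
    apply Nat.le_floor
    have : (18 : ℝ) ≤ ε ^ 2 * N := by
      have h' : 18 / ε ^ 2 * ε ^ 2 ≤ N * ε ^ 2 := mul_le_mul_of_nonneg_right e6 (by positivity)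
      have h'' : 18 / ε ^ 2 * ε ^ 2 = 18 := by field_simp
      linarith [h', h''.symm.le]
    exact_mod_cast this
  have hs4 : 4 ≤ s := by omega
  have hsR : (ε ^ 2 * N - 2) / 2 ≤ (s : ℝ) := by
    have h1 : ε ^ 2 * N < (K : ℝ) + 1 := Nat.lt_floor_add_one _
    have h2 : K ≤ 2 * s + 1 := by omega
    have h3 : (K : ℝ) ≤ 2 * (s : ℝ) + 1 := by exact_mod_cast h2
    linarith
  have hnss : n ≤ s * s := by
    have hε2N : (4 : ℝ) ≤ ε ^ 2 * N := by
      have : (18 : ℝ) ≤ ε ^ 2 * N := by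
        have h' : 18 / ε ^ 2 * ε ^ 2 ≤ N * ε ^ 2 := mul_le_mul_of_nonneg_right e6 (by positivity)
        have h'' : 18 / ε ^ 2 * ε ^ 2 = 18 := by field_simp
        linarith [h', h''.symm.le]
      linarith
    have ht1 : ε ^ 2 * N / 4 ≤ (ε ^ 2 * N - 2) / 2 := by linarith
    have ht2 : N ≤ (ε ^ 2 * N / 4) ^ 2 := by
      have h64 : 64 ≤ ε ^ 4 * N := by
        have h' : 64 / ε ^ 4 * ε ^ 4 ≤ N * ε ^ 4 := mul_le_mul_of_nonneg_right e7 (by positivity)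
        have h'' : 64 / ε ^ 4 * ε ^ 4 = 64 := by field_simp
        linarith [h', h''.symm.le]
      have : (ε ^ 2 * N / 4) ^ 2 = ε ^ 4 * N * N / 16 := by ring
      rw [this]
      nlinarith [hN0, h64]
    have hfinal : N ≤ ((s : ℝ)) * ((s : ℝ)) := by
      have ht0 : (0 : ℝ) ≤ ε ^ 2 * N / 4 := by positivity
      have := mul_le_mul (le_trans ht1 hsR) (le_trans ht1 hsR) ht0 (by positivity)
      nlinarith [ht2, this]
    have : (n : ℝ) ≤ ((s * s : ℕ) : ℝ) := by push_cast; exact hfinal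
    exact_mod_cast this
  have hpow10 : ((1 : ℝ) / 10) ^ s ≤ 1 / n := by
    have h2s : n ≤ 2 ^ s := le_trans hnss (sq_le_two_pow s hs4)
    have h10s : (2 : ℕ) ^ s ≤ 10 ^ s := Nat.pow_le_pow_left (by norm_num) s
    have hns : (n : ℝ) ≤ (10 : ℝ) ^ s := by
      have : ((n : ℕ) : ℝ) ≤ ((10 ^ s : ℕ) : ℝ) := by exact_mod_cast le_trans h2s h10s
      push_cast at this
      exact this
    rw [div_pow, one_pow]
    exact one_div_le_one_div_of_le hN0 hns
  -- conclude
  rw [uniformProb]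
  rw [div_le_iff₀ hΩposR]
  calc (((graphsWithDegreeSeq n D).filter _).card : ℝ)
      ≤ (1 / 10) ^ s * ((graphsWithDegreeSeq n D).card : ℝ) := hcard_event
    _ ≤ (1 / n) * ((graphsWithDegreeSeq n D).card : ℝ) :=
        mul_le_mul_of_nonneg_right hpow10 hΩposR.le
    _ = 1 / n * ((graphsWithDegreeSeq n D).card : ℝ) := rfl
end
end
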